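/- Existence and uniqueness for the initial value problem (Theorem 2.3): Assume Hypothesis (H). If g ∈ L¹_loc((a,b); r dx), z ∈ ℂ, c ∈ (a,b), and α, β ∈ ℂ, then there is a unique function f ∈ 𝔇_τ (i.e., f and f^[1] are locally absolutely continuous on (a,b)) satisfying (τ − z)f = g a.e. on (a,b), f(c) = α, and f^[1](c) = β. If, in addition, g, α, β, and z are real-valued, then the solution f is real-valued. -/

import Mathlib

open MeasureTheory Set Filter intervalIntegral

noncomputable section

/-- The open interval of real numbers determined by extended-real endpoints `a`, `b`. -/
def EI (a b : EReal) : Set ℝ := {x : ℝ | a < (x : EReal) ∧ (x : EReal) < b}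

/-- Hypothesis (H): `p, q, r, s` are real-valued measurable on `(a,b)`, `p > 0` and `r > 0`
a.e. on `(a,b)`, and `1/p, q, r, s ∈ L¹_loc((a,b); dx)`. -/
structure SLH (a b : EReal) (p q r s : ℝ → ℝ) : Prop where
  hab : a < b
  measp : Measurable p
  measq : Measurable q
  measr : Measurable r
  meass : Measurable s
  ppos : ∀ᵐ x ∂(volume : Measure ℝ), x ∈ EI a b → 0 < p x
  rpos : ∀ᵐ x ∂(volume : Measure ℝ), x ∈ EI a b → 0 < r x
  invp_loc : LocallyIntegrableOn (fun x => 1 / p x) (EI a b) volume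
  q_loc : LocallyIntegrableOn q (EI a b) volume
  r_loc : LocallyIntegrableOn r (EI a b) volume
  s_loc : LocallyIntegrableOn s (EI a b) volume

/-- `f` is locally absolutely continuous on the interval `I` with a.e. derivative `fd`. -/
def HasAEDerivOn (I : Set ℝ) (f fd : ℝ → ℝ) : Prop :=
  ∀ x ∈ I, ∀ y ∈ I,
    IntervalIntegrable fd volume x y ∧ f y - f x = ∫ t in x..y, fd t

/-- `f ∈ 𝔇_τ(I)`: `f` is locally AC on `I` with a.e. derivative `fd`, the first
quasi-derivative `f1 = p (f' + s f)` (a.e.) is locally AC with a.e. derivative `f1d`. -/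
def InDomTau (I : Set ℝ) (p s : ℝ → ℝ) (f fd f1 f1d : ℝ → ℝ) : Prop :=
  HasAEDerivOn I f fd ∧
    (∀ᵐ t ∂(volume : Measure ℝ), t ∈ I → f1 t = p t * (fd t + s t * f t)) ∧
    HasAEDerivOn I f1 f1d

/-- The differential expression `τ f = (1/r) (−(f^[1])′ + s f^[1] + q f)`. -/
def tauApp (q r s : ℝ → ℝ) (f f1 f1d : ℝ → ℝ) (t : ℝ) : ℝ :=
  (1 / r t) * (-f1d t + s t * f1 t + q t * f t)

/-- `u` (with data `ud, u1, u1d`) is a real solution of `(τ - lam) u = 0` on `I`. -/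
def IsSolutionWith (I : Set ℝ) (p q r s : ℝ → ℝ) (lam : ℝ) (u ud u1 u1d : ℝ → ℝ) : Prop :=
  InDomTau I p s u ud u1 u1d ∧
    ∀ᵐ t ∂(volume : Measure ℝ), t ∈ I → tauApp q r s u u1 u1d t = lam * u t

/-- `u` is a real solution of `(τ - lam) u = 0` on `I`. -/
def IsSolution (I : Set ℝ) (p q r s : ℝ → ℝ) (lam : ℝ) (u : ℝ → ℝ) : Prop :=
  ∃ ud u1 u1d, IsSolutionWith I p q r s lam u ud u1 u1d

/-- Complex version: loc AC with a.e. derivative. -/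
def HasAEDerivOnC (I : Set ℝ) (f fd : ℝ → ℂ) : Prop :=
  ∀ x ∈ I, ∀ y ∈ I,
    IntervalIntegrable fd volume x y ∧ f y - f x = ∫ t in x..y, fd t

/-- Complex version of `InDomTau`. -/
def InDomTauC (I : Set ℝ) (p s : ℝ → ℝ) (f fd f1 f1d : ℝ → ℂ) : Prop :=
  HasAEDerivOnC I f fd ∧
    (∀ᵐ t ∂(volume : Measure ℝ), t ∈ I → f1 t = (p t : ℂ) * (fd t + (s t : ℂ) * f t)) ∧
    HasAEDerivOnC I f1 f1d

/-- Complex version of `τ`. -/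
def tauAppC (q r s : ℝ → ℝ) (f f1 f1d : ℝ → ℂ) (t : ℝ) : ℂ :=
  (1 / (r t : ℂ)) * (-f1d t + (s t : ℂ) * f1 t + (q t : ℂ) * f t)

/-- `u` (with data) is a complex solution of `(τ - z) u = 0` on `I`. -/
def IsSolutionWithC (I : Set ℝ) (p q r s : ℝ → ℝ) (z : ℂ) (u ud u1 u1d : ℝ → ℂ) : Prop :=
  InDomTauC I p s u ud u1 u1d ∧
    ∀ᵐ t ∂(volume : Measure ℝ), t ∈ I → tauAppC q r s u u1 u1d t = z * u t

/-- `u` does not vanish identically on `I`. -/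
def NontrivOn (I : Set ℝ) (u : ℝ → ℝ) : Prop := ∃ x ∈ I, u x ≠ 0

/-- Linear independence of two real functions on `I`. -/
def LinIndepOn (I : Set ℝ) (u v : ℝ → ℝ) : Prop :=
  ∀ c₁ c₂ : ℝ, (∀ x ∈ I, c₁ * u x + c₂ * v x = 0) → c₁ = 0 ∧ c₂ = 0

/-- `τ - lam` is disconjugate on `I`: every nontrivial real solution has at most one zero. -/
def Disconjugate (I : Set ℝ) (p q r s : ℝ → ℝ) (lam : ℝ) : Prop :=
  ∀ u : ℝ → ℝ, IsSolution I p q r s lam u → NontrivOn I u →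
    ∀ x ∈ I, ∀ y ∈ I, u x = 0 → u y = 0 → x = y

/-- `f` has compact support contained in `I`. -/
def SuppIn (I : Set ℝ) (f : ℝ → ℂ) : Prop :=
  ∃ K : Set ℝ, IsCompact K ∧ K ⊆ I ∧ ∀ x ∈ I \ K, f x = 0

/-- Membership (with derivative data) in the domain of the pre-minimal operator `Ṫ`. -/
def InDomPreMin (a b : EReal) (p q r s : ℝ → ℝ) (f fd f1 f1d : ℝ → ℂ) : Prop :=
  InDomTauC (EI a b) p s f fd f1 f1d ∧ SuppIn (EI a b) f ∧
    IntegrableOn (fun x => r x * ‖f x‖ ^ 2) (EI a b) volume ∧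
    IntegrableOn (fun x => r x * ‖tauAppC q r s f f1 f1d x‖ ^ 2) (EI a b) volume

/-- `(f, Ṫ f) ≥ lam0 ‖f‖²` for all `f ∈ dom(Ṫ)`. -/
def PreMinLowerBound (a b : EReal) (p q r s : ℝ → ℝ) (lam0 : ℝ) : Prop :=
  ∀ f fd f1 f1d : ℝ → ℂ, InDomPreMin a b p q r s f fd f1 f1d →
    lam0 * (∫ x in EI a b, r x * ‖f x‖ ^ 2) ≤
      (∫ x in EI a b, (r x : ℂ) * (starRingEnd ℂ (f x) * tauAppC q r s f f1 f1d x)).re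

/-- Membership (with derivative data) in the domain of the maximal operator `T_max`. -/
def InDomMax (a b : EReal) (p q r s : ℝ → ℝ) (g gd g1 g1d : ℝ → ℂ) : Prop :=
  InDomTauC (EI a b) p s g gd g1 g1d ∧
    IntegrableOn (fun x => r x * ‖g x‖ ^ 2) (EI a b) volume ∧
    IntegrableOn (fun x => r x * ‖tauAppC q r s g g1 g1d x‖ ^ 2) (EI a b) volume

/-- `τ - lam` is oscillatory at `b`: some nontrivial real solution has zeros accumulating at `b`. -/
def OscillatoryAtB (a b : EReal) (p q r s : ℝ → ℝ) (lam : ℝ) : Prop :=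
  ∃ u : ℝ → ℝ, IsSolution (EI a b) p q r s lam u ∧ NontrivOn (EI a b) u ∧
    ∀ c ∈ EI a b, ∃ x ∈ EI a b, c < x ∧ u x = 0

/-- `τ - lam` is oscillatory at `a`. -/
def OscillatoryAtA (a b : EReal) (p q r s : ℝ → ℝ) (lam : ℝ) : Prop :=
  ∃ u : ℝ → ℝ, IsSolution (EI a b) p q r s lam u ∧ NontrivOn (EI a b) u ∧
    ∀ c ∈ EI a b, ∃ x ∈ EI a b, x < c ∧ u x = 0

/-- The filter of real numbers tending to the endpoint `a` from the right. -/
def atEndA (a : EReal) : Filter ℝ :=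
  Filter.comap (fun x : ℝ => (x : EReal)) (nhdsWithin a (Set.Ioi a))

/-- The filter of real numbers tending to the endpoint `b` from the left. -/
def atEndB (b : EReal) : Filter ℝ :=
  Filter.comap (fun x : ℝ => (x : EReal)) (nhdsWithin b (Set.Iio b))

/-- `u` lies in `L²((a,b); r dx)` near `b`. -/
def L2NearB (a b : EReal) (r : ℝ → ℝ) (u : ℝ → ℂ) : Prop :=
  ∀ c ∈ EI a b, IntegrableOn (fun x => r x * ‖u x‖ ^ 2) (EI (c : EReal) b) volume

/-- `u` lies in `L²((a,b); r dx)` near `a`. -/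
def L2NearA (a b : EReal) (r : ℝ → ℝ) (u : ℝ → ℂ) : Prop :=
  ∀ c ∈ EI a b, IntegrableOn (fun x => r x * ‖u x‖ ^ 2) (EI a (c : EReal)) volume

/-- `τ` is in the limit circle case at `b`. -/
def LimitCircleAtB (a b : EReal) (p q r s : ℝ → ℝ) : Prop :=
  ∀ z : ℂ, ∀ u ud u1 u1d : ℝ → ℂ,
    IsSolutionWithC (EI a b) p q r s z u ud u1 u1d → L2NearB a b r u

/-- `τ` is in the limit circle case at `a`. -/
def LimitCircleAtA (a b : EReal) (p q r s : ℝ → ℝ) : Prop :=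
  ∀ z : ℂ, ∀ u ud u1 u1d : ℝ → ℂ,
    IsSolutionWithC (EI a b) p q r s z u ud u1 u1d → L2NearA a b r u

/-- `u` is a principal solution of `(τ - lam) u = 0` at `b` on the interval `I`. -/
def PrincipalAtB (I : Set ℝ) (b : EReal) (p q r s : ℝ → ℝ) (lam : ℝ) (u : ℝ → ℝ) : Prop :=
  IsSolution I p q r s lam u ∧ NontrivOn I u ∧
    ∀ v : ℝ → ℝ, IsSolution I p q r s lam v → LinIndepOn I u v →
      Tendsto (fun x => u x / v x) (atEndB b) (nhds 0)

/-- `u` is a principal solution of `(τ - lam) u = 0` at `a` on the interval `I`. -/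
def PrincipalAtA (I : Set ℝ) (a : EReal) (p q r s : ℝ → ℝ) (lam : ℝ) (u : ℝ → ℝ) : Prop :=
  IsSolution I p q r s lam u ∧ NontrivOn I u ∧
    ∀ v : ℝ → ℝ, IsSolution I p q r s lam v → LinIndepOn I u v →
      Tendsto (fun x => u x / v x) (atEndA a) (nhds 0)

/-- `v` is a nonprincipal solution of `(τ - lam) u = 0` at `b` on the interval `I`. -/
def NonprincipalAtB (I : Set ℝ) (b : EReal) (p q r s : ℝ → ℝ) (lam : ℝ) (v : ℝ → ℝ) : Prop :=
  IsSolution I p q r s lam v ∧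
    ∃ u : ℝ → ℝ, PrincipalAtB I b p q r s lam u ∧ LinIndepOn I u v

end

open Topology

noncomputable section IVPAux

/-- Coefficient data for a first-order linear 2x2 complex ODE system. -/
structure Co where
  a11 : ℝ → ℂ
  a12 : ℝ → ℂ
  a21 : ℝ → ℂ
  a22 : ℝ → ℂ
  h0 : ℝ → ℂ
  m11 : Measurable a11
  m12 : Measurable a12
  m21 : Measurable a21
  m22 : Measurable a22
  mh0 : Measurable h0

namespace Co

variable (C : Co)

/-- The vector field. -/
def F (t : ℝ) (v : ℂ × ℂ) : ℂ × ℂ :=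
  (C.a11 t * v.1 + C.a12 t * v.2, C.a21 t * v.1 + C.a22 t * v.2 + C.h0 t)

/-- The L¹ Lipschitz bound. -/
def m (t : ℝ) : ℝ := ‖C.a11 t‖ + ‖C.a12 t‖ + ‖C.a21 t‖ + ‖C.a22 t‖

lemma m_nonneg (t : ℝ) : 0 ≤ C.m t := by
  have := norm_nonneg (C.a11 t); have := norm_nonneg (C.a12 t)
  have := norm_nonneg (C.a21 t); have := norm_nonneg (C.a22 t)
  unfold m; linarith

lemma measurable_m : Measurable C.m := by
  exact (((C.m11.norm.add C.m12.norm).add C.m21.norm).add C.m22.norm)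

lemma norm_F_sub_F (t : ℝ) (v w : ℂ × ℂ) :
    ‖C.F t v - C.F t w‖ ≤ C.m t * ‖v - w‖ := by
  have h1 : ‖(v - w).1‖ ≤ ‖v - w‖ := norm_fst_le _
  have h2 : ‖(v - w).2‖ ≤ ‖v - w‖ := norm_snd_le _
  have e1 : (C.F t v - C.F t w).1 = C.a11 t * (v - w).1 + C.a12 t * (v - w).2 := by
    simp [F]; ring
  have e2 : (C.F t v - C.F t w).2 = C.a21 t * (v - w).1 + C.a22 t * (v - w).2 := by
    simp [F]; ring
  have hn : ‖C.F t v - C.F t w‖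
      = max ‖(C.F t v - C.F t w).1‖ ‖(C.F t v - C.F t w).2‖ := rfl
  rw [hn, e1, e2]
  have b1 : ‖C.a11 t * (v - w).1 + C.a12 t * (v - w).2‖ ≤ C.m t * ‖v - w‖ := by
    refine (norm_add_le _ _).trans ?_
    rw [norm_mul, norm_mul]
    have := norm_nonneg (C.a11 t); have := norm_nonneg (C.a12 t)
    have := norm_nonneg (C.a21 t); have := norm_nonneg (C.a22 t)
    have := norm_nonneg (v - w)
    unfold m
    nlinarith [mul_le_mul_of_nonneg_left h1 (norm_nonneg (C.a11 t)),
      mul_le_mul_of_nonneg_left h2 (norm_nonneg (C.a12 t))]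
  have b2 : ‖C.a21 t * (v - w).1 + C.a22 t * (v - w).2‖ ≤ C.m t * ‖v - w‖ := by
    refine (norm_add_le _ _).trans ?_
    rw [norm_mul, norm_mul]
    have := norm_nonneg (C.a11 t); have := norm_nonneg (C.a12 t)
    have := norm_nonneg (C.a21 t); have := norm_nonneg (C.a22 t)
    have := norm_nonneg (v - w)
    unfold m
    nlinarith [mul_le_mul_of_nonneg_left h1 (norm_nonneg (C.a21 t)),
      mul_le_mul_of_nonneg_left h2 (norm_nonneg (C.a22 t))]
  exact max_le b1 b2

lemma norm_F_le (t : ℝ) (v : ℂ × ℂ) : ‖C.F t v‖ ≤ C.m t * ‖v‖ + ‖C.h0 t‖ := by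
  have h := C.norm_F_sub_F t v 0
  have h0 : ‖C.F t 0‖ ≤ ‖C.h0 t‖ := by
    have : C.F t 0 = (0, C.h0 t) := by simp [F]
    rw [this]
    have : ‖((0 : ℂ), C.h0 t)‖ = max ‖(0:ℂ)‖ ‖C.h0 t‖ := rfl
    rw [this]; simp
  calc ‖C.F t v‖ ≤ ‖C.F t v - C.F t 0‖ + ‖C.F t 0‖ := by
        simpa using norm_add_le (C.F t v - C.F t 0) (C.F t 0)
    _ ≤ C.m t * ‖v - 0‖ + ‖C.h0 t‖ := add_le_add h h0
    _ = C.m t * ‖v‖ + ‖C.h0 t‖ := by simp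

lemma measurable_comp {u : ℝ → ℂ × ℂ} (hu : Measurable u) :
    Measurable (fun t => C.F t (u t)) := by
  apply Measurable.prod
  · exact (C.m11.mul hu.fst).add (C.m12.mul hu.snd)
  · exact ((C.m21.mul hu.fst).add (C.m22.mul hu.snd)).add C.mh0

lemma aestronglyMeasurable_comp {u : ℝ → ℂ × ℂ} {μ : Measure ℝ}
    (hu : AEStronglyMeasurable u μ) :
    AEStronglyMeasurable (fun t => C.F t (u t)) μ := by
  have h1 : AEStronglyMeasurable (fun t => (u t).1) μ :=
    (continuous_fst.comp_aestronglyMeasurable hu)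
  have h2 : AEStronglyMeasurable (fun t => (u t).2) μ :=
    (continuous_snd.comp_aestronglyMeasurable hu)
  apply AEStronglyMeasurable.prodMk
  · exact ((C.m11.aestronglyMeasurable.mul h1).add (C.m12.aestronglyMeasurable.mul h2))
  · exact (((C.m21.aestronglyMeasurable.mul h1).add (C.m22.aestronglyMeasurable.mul h2)).add
      C.mh0.aestronglyMeasurable)

lemma integrableOn_comp {u : ℝ → ℂ × ℂ} {J : Set ℝ} (hJ : MeasurableSet J)
    (hu : AEStronglyMeasurable u (volume.restrict J)) {Cb : ℝ}
    (hb : ∀ x ∈ J, ‖u x‖ ≤ Cb)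
    (hm : IntegrableOn C.m J volume) (hh : IntegrableOn C.h0 J volume) :
    IntegrableOn (fun t => C.F t (u t)) J volume := by
  refine Integrable.mono' ((hm.mul_const Cb).add hh.norm)
    (C.aestronglyMeasurable_comp hu) ?_
  rw [ae_restrict_iff' hJ]
  filter_upwards with t ht
  calc ‖C.F t (u t)‖ ≤ C.m t * ‖u t‖ + ‖C.h0 t‖ := C.norm_F_le t (u t)
    _ ≤ C.m t * Cb + ‖C.h0 t‖ := by
        have := mul_le_mul_of_nonneg_left (hb t ht) (C.m_nonneg t)
        linarith

end Co

end IVPAux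
namespace IVPAux

lemma key_bound {g : ℝ → ℂ × ℂ} {ρ : ℝ → ℝ} {J : Set ℝ} (hJ : MeasurableSet J)
    (hg : IntegrableOn g J volume) (hρ : IntegrableOn ρ J volume)
    (hle : ∀ t ∈ J, ‖g t‖ ≤ ρ t) (e x : ℝ) :
    ‖∫ t in e..x, J.indicator g t‖ ≤ ∫ t in J, ρ t := by
  have hind : Integrable (J.indicator g) volume := (integrable_indicator_iff hJ).2 hg
  calc ‖∫ t in e..x, J.indicator g t‖ ≤ ∫ t in Set.uIoc e x, ‖J.indicator g t‖ :=
        norm_integral_le_integral_norm_uIoc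
    _ ≤ ∫ t, ‖J.indicator g t‖ :=
        setIntegral_le_integral hind.norm (Eventually.of_forall fun t => norm_nonneg _)
    _ = ∫ t in J, ‖g t‖ := by
        rw [← MeasureTheory.integral_indicator hJ]
        congr 1
        funext t
        rw [norm_indicator_eq_indicator_norm]
    _ ≤ ∫ t in J, ρ t := setIntegral_mono_on hg.norm hρ hJ (fun t ht => hle t ht)

lemma indicator_intervalIntegral_eq {g : ℝ → ℂ × ℂ} {J : Set ℝ} {e x : ℝ}
    (hJo : OrdConnected J) (he : e ∈ J) (hx : x ∈ J) :
    ∫ t in e..x, J.indicator g t = ∫ t in e..x, g t :=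
  intervalIntegral.integral_congr fun t ht => indicator_of_mem (hJo.uIcc_subset he hx ht) _

lemma loc_exists (C : Co) {d₀ d₁ : ℝ}
    (hm : IntegrableOn C.m (Icc d₀ d₁) volume) (hh : IntegrableOn C.h0 (Icc d₀ d₁) volume)
    (hsmall : ∫ t in Icc d₀ d₁, C.m t ≤ 1 / 2)
    {e : ℝ} (he : e ∈ Icc d₀ d₁) (ξ : ℂ × ℂ) :
    ∃ u : ℝ → ℂ × ℂ, Measurable u ∧ (∃ Cb, ∀ x, ‖u x‖ ≤ Cb) ∧
      ∀ x ∈ Icc d₀ d₁, u x = ξ + ∫ t in e..x, C.F t (u t) := by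
  set J := Icc d₀ d₁ with hJdef
  have hJm : MeasurableSet J := measurableSet_Icc
  have hJo : OrdConnected J := ordConnected_Icc
  set K₀ : ℝ := ∫ t in J, (C.m t * ‖ξ‖ + ‖C.h0 t‖) with hK₀def
  have hK₀int : IntegrableOn (fun t => C.m t * ‖ξ‖ + ‖C.h0 t‖) J volume :=
    (hm.mul_const _).add hh.norm
  have hK₀ : 0 ≤ K₀ := setIntegral_nonneg hJm (fun t _ =>
    add_nonneg (mul_nonneg (C.m_nonneg t) (norm_nonneg _)) (norm_nonneg _))
  set Cb : ℝ := ‖ξ‖ + 2 * K₀ with hCbdef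
  set seq : ℕ → ℝ → ℂ × ℂ := fun n => Nat.rec (fun _ => ξ)
    (fun _ un => fun x => ξ + ∫ t in e..x,
      J.indicator (fun t' => C.F t' (un t')) t) n with hseq
  have hseqS : ∀ n x, seq (n + 1) x
      = ξ + ∫ t in e..x, J.indicator (fun t' => C.F t' (seq n t')) t := fun n x => rfl
  have hbnd_le : ∀ n, ‖ξ‖ + K₀ * (2 - 2 * (1/2)^n) ≤ Cb := by
    intro n
    have h1 : (0:ℝ) ≤ (1/2:ℝ)^n := by positivity
    have : K₀ * (2 - 2 * (1/2)^n) ≤ K₀ * 2 := by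
      apply mul_le_mul_of_nonneg_left _ hK₀
      nlinarith
    rw [hCbdef]; linarith
  -- main induction
  have Q : ∀ n, Measurable (seq n) ∧ (∀ x, ‖seq n x‖ ≤ ‖ξ‖ + K₀ * (2 - 2 * (1/2)^n)) ∧
      (∀ x, ‖seq (n + 1) x - seq n x‖ ≤ K₀ * (1/2)^n) := by
    intro n
    induction n with
    | zero =>
      refine ⟨measurable_const, fun x => by rw [show seq 0 x = ξ from rfl]; norm_num, fun x => ?_⟩
      have hg0 : IntegrableOn (fun t => C.F t (seq 0 t)) J volume :=
        C.integrableOn_comp hJm aestronglyMeasurable_const (fun x _ => le_refl ‖ξ‖) hm hh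
      rw [hseqS 0 x, show seq 0 x = ξ from rfl]
      have hk := key_bound hJm hg0 hK₀int (fun t _ => C.norm_F_le t ξ) e x
      simpa using hk
    | succ n ih =>
      obtain ⟨hmn, hbn, hin⟩ := ih
      have hbn' : ∀ x, ‖seq n x‖ ≤ Cb := fun x => (hbn x).trans (hbnd_le n)
      have hgn : IntegrableOn (fun t => C.F t (seq n t)) J volume :=
        C.integrableOn_comp hJm hmn.aestronglyMeasurable (fun x _ => hbn' x) hm hh
      have hgn_ind : Integrable (J.indicator (fun t' => C.F t' (seq n t'))) volume :=
        (integrable_indicator_iff hJm).2 hgn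
      have hcont : Continuous (seq (n + 1)) := by
        have := hgn_ind.continuous_primitive e
        have h2 : Continuous fun x => ξ + ∫ t in e..x,
            J.indicator (fun t' => C.F t' (seq n t')) t := continuous_const.add this
        exact h2
      have hmn1 : Measurable (seq (n + 1)) := hcont.measurable
      have hbn1 : ∀ x, ‖seq (n + 1) x‖ ≤ ‖ξ‖ + K₀ * (2 - 2 * (1/2)^(n+1)) := by
        intro x
        have h1 : ‖seq (n + 1) x‖ ≤ ‖seq n x‖ + ‖seq (n + 1) x - seq n x‖ := by
          have := norm_add_le (seq n x) (seq (n + 1) x - seq n x)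
          simpa using this
        have := hbn x; have := hin x
        have hpow : (1/2:ℝ)^(n+1) = (1/2) * (1/2)^n := by ring
        rw [hpow]; linarith
      have hbn1' : ∀ x, ‖seq (n + 1) x‖ ≤ Cb := fun x => (hbn1 x).trans (hbnd_le (n+1))
      have hgn1 : IntegrableOn (fun t => C.F t (seq (n+1) t)) J volume :=
        C.integrableOn_comp hJm hmn1.aestronglyMeasurable (fun x _ => hbn1' x) hm hh
      have hgn1_ind : Integrable (J.indicator (fun t' => C.F t' (seq (n+1) t'))) volume :=
        (integrable_indicator_iff hJm).2 hgn1
      refine ⟨hmn1, hbn1, fun x => ?_⟩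
      have hsub : seq (n + 2) x - seq (n + 1) x
          = ∫ t in e..x, J.indicator
              (fun t' => C.F t' (seq (n+1) t') - C.F t' (seq n t')) t := by
        rw [hseqS (n+1) x, hseqS n x]
        have h1 : (ξ + ∫ t in e..x, J.indicator (fun t' => C.F t' (seq (n+1) t')) t)
            - (ξ + ∫ t in e..x, J.indicator (fun t' => C.F t' (seq n t')) t)
            = (∫ t in e..x, J.indicator (fun t' => C.F t' (seq (n+1) t')) t)
              - ∫ t in e..x, J.indicator (fun t' => C.F t' (seq n t')) t := by ring
        rw [h1, ← intervalIntegral.integral_sub hgn1_ind.intervalIntegrable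
          hgn_ind.intervalIntegrable]
        congr 1
        funext t
        by_cases ht : t ∈ J <;> simp [ht]
      rw [hsub]
      have hkey := key_bound (g := fun t' => C.F t' (seq (n+1) t') - C.F t' (seq n t'))
        (ρ := fun t => C.m t * (K₀ * (1/2)^n)) hJm (hgn1.sub hgn) (hm.mul_const _)
        (fun t _ => (C.norm_F_sub_F t _ _).trans
          (mul_le_mul_of_nonneg_left (hin t) (C.m_nonneg t))) e x
      refine hkey.trans ?_
      rw [MeasureTheory.integral_mul_const]
      have : (∫ t in J, C.m t) * (K₀ * (1/2)^n) ≤ (1/2) * (K₀ * (1/2)^n) := by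
        apply mul_le_mul_of_nonneg_right hsmall (by positivity)
      calc (∫ t in J, C.m t) * (K₀ * (1/2)^n) ≤ (1/2) * (K₀ * (1/2)^n) := this
        _ = K₀ * (1/2)^(n+1) := by ring
  -- Cauchy and limit
  have hdist : ∀ x n, dist (seq n x) (seq (n+1) x) ≤ K₀ * (1/2)^n := by
    intro x n
    rw [dist_eq_norm, norm_sub_rev]
    exact (Q n).2.2 x
  have hcauchy : ∀ x, CauchySeq (fun n => seq n x) := fun x =>
    cauchySeq_of_le_geometric (1/2) K₀ (by norm_num) (hdist x)
  have hU := fun x => cauchySeq_tendsto_of_complete (hcauchy x)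
  set u : ℝ → ℂ × ℂ := fun x => (hU x).choose with hudef
  have htend : ∀ x, Tendsto (fun n => seq n x) atTop (𝓝 (u x)) := fun x => (hU x).choose_spec
  have humeas : Measurable u :=
    measurable_of_tendsto_metrizable' atTop (fun n => (Q n).1) (tendsto_pi_nhds.2 htend)
  have hubnd : ∀ x, ‖u x‖ ≤ Cb := by
    intro x
    refine le_of_tendsto (htend x).norm (Eventually.of_forall fun n => ?_)
    exact ((Q n).2.1 x).trans (hbnd_le n)
  have htail : ∀ n x, ‖seq n x - u x‖ ≤ K₀ * (1/2)^n * 2 := by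
    intro n x
    have := dist_le_of_le_geometric_of_tendsto (1/2) K₀ (by norm_num) (hdist x) (htend x) n
    rw [dist_eq_norm] at this
    refine this.trans (le_of_eq ?_)
    rw [show (1:ℝ) - 1/2 = 1/2 by norm_num]
    ring
  refine ⟨u, humeas, ⟨Cb, hubnd⟩, fun x hx => ?_⟩
  have hFu : IntegrableOn (fun t => C.F t (u t)) J volume :=
    C.integrableOn_comp hJm humeas.aestronglyMeasurable (fun y _ => hubnd y) hm hh
  have hFu_ind : Integrable (J.indicator (fun t' => C.F t' (u t'))) volume :=
    (integrable_indicator_iff hJm).2 hFu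
  have h1 : Tendsto (fun n => seq (n+1) x) atTop (𝓝 (u x)) :=
    (htend x).comp (tendsto_add_atTop_nat 1)
  have h2 : Tendsto (fun n => seq (n+1) x) atTop
      (𝓝 (ξ + ∫ t in e..x, J.indicator (fun t' => C.F t' (u t')) t)) := by
    have hdiff : ∀ n, ‖(seq (n+1) x - ξ) - ∫ t in e..x, J.indicator (fun t' => C.F t' (u t')) t‖
        ≤ ((∫ t in J, C.m t) * (K₀ * 2)) * (1/2)^n := by
      intro n
      have hbn' : ∀ y, ‖seq n y‖ ≤ Cb := fun y => ((Q n).2.1 y).trans (hbnd_le n)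
      have hgn : IntegrableOn (fun t => C.F t (seq n t)) J volume :=
        C.integrableOn_comp hJm (Q n).1.aestronglyMeasurable (fun y _ => hbn' y) hm hh
      have hgn_ind : Integrable (J.indicator (fun t' => C.F t' (seq n t'))) volume :=
        (integrable_indicator_iff hJm).2 hgn
      have heq : (seq (n+1) x - ξ) - ∫ t in e..x, J.indicator (fun t' => C.F t' (u t')) t
          = ∫ t in e..x, J.indicator (fun t' => C.F t' (seq n t') - C.F t' (u t')) t := by
        rw [hseqS n x]
        have h3 : (ξ + ∫ t in e..x, J.indicator (fun t' => C.F t' (seq n t')) t) - ξ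
            - ∫ t in e..x, J.indicator (fun t' => C.F t' (u t')) t
            = (∫ t in e..x, J.indicator (fun t' => C.F t' (seq n t')) t)
              - ∫ t in e..x, J.indicator (fun t' => C.F t' (u t')) t := by ring
        rw [h3, ← intervalIntegral.integral_sub hgn_ind.intervalIntegrable
          hFu_ind.intervalIntegrable]
        congr 1
        funext t
        by_cases ht : t ∈ J <;> simp [ht]
      rw [heq]
      have hkey := key_bound (g := fun t' => C.F t' (seq n t') - C.F t' (u t'))
        (ρ := fun t => C.m t * (K₀ * (1/2)^n * 2)) hJm (hgn.sub hFu) (hm.mul_const _)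
        (fun t _ => (C.norm_F_sub_F t _ _).trans
          (mul_le_mul_of_nonneg_left (htail n t) (C.m_nonneg t))) e x
      refine hkey.trans (le_of_eq ?_)
      rw [MeasureTheory.integral_mul_const]
      ring
    have hlim0 : Tendsto (fun n : ℕ => ((∫ t in J, C.m t) * (K₀ * 2)) * (1/2)^n)
        atTop (𝓝 0) := by
      have := tendsto_pow_atTop_nhds_zero_of_lt_one (by norm_num : (0:ℝ) ≤ 1/2)
        (by norm_num : (1/2:ℝ) < 1)
      simpa using this.const_mul ((∫ t in J, C.m t) * (K₀ * 2))
    have h4 : Tendsto (fun n => (seq (n+1) x - ξ)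
        - ∫ t in e..x, J.indicator (fun t' => C.F t' (u t')) t) atTop (𝓝 0) :=
      squeeze_zero_norm hdiff hlim0
    have h5 := h4.add_const (ξ + ∫ t in e..x, J.indicator (fun t' => C.F t' (u t')) t)
    simp only [zero_add] at h5
    convert h5 using 2 with n
    ring
  have := tendsto_nhds_unique h1 h2
  rw [this, indicator_intervalIntegral_eq hJo he hx]

end IVPAux
namespace IVPAux

lemma cont_of_primitive {E : Type*} [NormedAddCommGroup E] [NormedSpace ℝ E]
    {f w : ℝ → E} {c d : ℝ} (hint : IntegrableOn w (uIcc c d) volume) (ξ : E)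
    (heq : ∀ x ∈ uIcc c d, f x = ξ + ∫ t in c..x, w t) :
    ContinuousOn f (uIcc c d) := by
  have h : ContinuousOn (fun x => ξ + ∫ t in c..x, w t) (uIcc c d) :=
    continuousOn_const.add (intervalIntegral.continuousOn_primitive_interval hint)
  exact h.congr heq

lemma gronwall {c d : ℝ} {m₀ φ : ℝ → ℝ}
    (hm : IntegrableOn m₀ (uIcc c d) volume) (hmn : ∀ t, 0 ≤ m₀ t)
    (hφc : ContinuousOn φ (uIcc c d)) (hφn : ∀ t, 0 ≤ φ t)
    (hineq : ∀ x ∈ uIcc c d, φ x ≤ |∫ t in c..x, m₀ t * φ t|) :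
    ∀ x ∈ uIcc c d, φ x = 0 := by
  set J := uIcc c d with hJdef
  have hJm : MeasurableSet J := measurableSet_uIcc
  have hJc : IsCompact J := isCompact_uIcc
  have hJo : OrdConnected J := ordConnected_uIcc
  have hcJ : c ∈ J := left_mem_uIcc
  obtain ⟨Cφ, hCφ⟩ := hJc.exists_bound_of_continuousOn hφc
  have hmφ : IntegrableOn (fun t => m₀ t * φ t) J volume := by
    refine Integrable.mono' (hm.mul_const Cφ) ?_ ?_
    · exact hm.aestronglyMeasurable.mul (hφc.aestronglyMeasurable hJm)
    · rw [ae_restrict_iff' hJm]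
      filter_upwards with t ht
      rw [Real.norm_eq_abs, abs_of_nonneg (mul_nonneg (hmn t) (hφn t))]
      refine mul_le_mul_of_nonneg_left ?_ (hmn t)
      exact (le_abs_self _).trans (by simpa [Real.norm_eq_abs] using hCφ t ht)
  set mI : ℝ → ℝ := J.indicator m₀ with hmIdef
  have hmI : Integrable mI volume := (integrable_indicator_iff hJm).2 hm
  set M : ℝ → ℝ := fun x => ∫ t in c..x, mI t with hMdef
  have hMc : Continuous M := hmI.continuous_primitive c
  obtain ⟨δ, hδ0, hδ⟩ := Metric.uniformContinuousOn_iff_le.1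
    (hJc.uniformContinuousOn_of_continuous hMc.continuousOn) (1/2) (by norm_num)
  set δ' : ℝ := δ / 2 with hδ'def
  have hδ'0 : 0 < δ' := by positivity
  have hwin : ∀ t₀ t₁, t₀ ∈ J → t₁ ∈ J → t₀ ≤ t₁ → t₁ - t₀ ≤ δ' →
      ∫ t in t₀..t₁, m₀ t ≤ 1/2 := by
    intro t₀ t₁ h0 h1 h01 hlen
    have he : ∫ t in t₀..t₁, m₀ t = ∫ t in t₀..t₁, mI t := by
      refine (intervalIntegral.integral_congr fun t ht => ?_).symm
      exact indicator_of_mem (hJo.uIcc_subset h0 h1 ht) _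
    have hsub : ∫ t in t₀..t₁, mI t = M t₁ - M t₀ :=
      (intervalIntegral.integral_interval_sub_left hmI.intervalIntegrable
        hmI.intervalIntegrable).symm
    rw [he, hsub]
    have := hδ t₁ h1 t₀ h0 (by rw [Real.dist_eq, abs_of_nonneg (by linarith)]; linarith)
    rw [Real.dist_eq] at this
    exact (le_abs_self _).trans this
  have hmφ_ii : ∀ x ∈ J, ∀ y ∈ J, IntervalIntegrable (fun t => m₀ t * φ t) volume x y :=
    fun x hx y hy => (hmφ.mono_set (hJo.uIcc_subset hx hy)).intervalIntegrable
  have hm_ii : ∀ x ∈ J, ∀ y ∈ J, IntervalIntegrable m₀ volume x y :=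
    fun x hx y hy => (hm.mono_set (hJo.uIcc_subset hx hy)).intervalIntegrable
  -- right-hand side
  have hright : ∀ n : ℕ, ∀ x ∈ J, c ≤ x → x ≤ c + n * δ' → φ x = 0 := by
    intro n
    induction n with
    | zero =>
      intro x hx hcx hxn
      have hxc : x = c := le_antisymm (by simpa using hxn) hcx
      subst hxc
      have := hineq x hx
      simp only [intervalIntegral.integral_same, abs_zero] at this
      exact le_antisymm this (hφn x)
    | succ n ih =>
      intro x hx hcx hxn
      by_cases hxn' : x ≤ c + n * δ'
      · exact ih x hx hcx hxn'
      push_neg at hxn'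
      set t₀ : ℝ := c + n * δ' with ht₀def
      have ht₀x : t₀ ≤ x := hxn'.le
      have hct₀ : c ≤ t₀ := le_add_of_nonneg_right (by positivity)
      have ht₀J : t₀ ∈ J := hJo.out hcJ hx ⟨hct₀, ht₀x⟩
      have hxt₀δ : x ≤ t₀ + δ' := by
        have : ((n : ℝ) + 1) * δ' = n * δ' + δ' := by ring
        rw [ht₀def]
        push_cast at hxn
        linarith
      set W : Set ℝ := J ∩ Icc t₀ (t₀ + δ') with hWdef
      have hWsub : W ⊆ J := inter_subset_left
      have hWc : IsCompact W := hJc.inter_right isClosed_Icc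
      have ht₀W : t₀ ∈ W := ⟨ht₀J, ⟨le_refl _, by linarith⟩⟩
      have hWne : (φ '' W).Nonempty := ⟨φ t₀, t₀, ht₀W, rfl⟩
      have hbdd : BddAbove (φ '' W) :=
        (hWc.image_of_continuousOn (hφc.mono hWsub)).bddAbove
      set S : ℝ := sSup (φ '' W) with hSdef
      have hSle : ∀ y ∈ W, φ y ≤ S := fun y hy => le_csSup hbdd ⟨y, hy, rfl⟩
      have hS0 : 0 ≤ S := (hφn t₀).trans (hSle t₀ ht₀W)
      have key : ∀ y ∈ W, φ y ≤ 1/2 * S := by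
        rintro y ⟨hyJ, hyt₀, hyδ⟩
        have hcy : c ≤ y := hct₀.trans hyt₀
        have hsplit : ∫ t in c..y, m₀ t * φ t
            = (∫ t in c..t₀, m₀ t * φ t) + ∫ t in t₀..y, m₀ t * φ t :=
          (intervalIntegral.integral_add_adjacent_intervals
            (hmφ_ii c hcJ t₀ ht₀J) (hmφ_ii t₀ ht₀J y hyJ)).symm
        have hz : ∫ t in c..t₀, m₀ t * φ t = 0 := by
          have hEq : EqOn (fun t => m₀ t * φ t) (fun _ => (0:ℝ)) (uIcc c t₀) := by
            intro t ht
            have htJ : t ∈ J := hJo.uIcc_subset hcJ ht₀J ht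
            rw [uIcc_of_le hct₀] at ht
            have : φ t = 0 := ih t htJ ht.1 ht.2
            simp [this]
          rw [intervalIntegral.integral_congr hEq]
          simp
        have habs : |∫ t in c..y, m₀ t * φ t| = ∫ t in c..y, m₀ t * φ t :=
          abs_of_nonneg (intervalIntegral.integral_nonneg hcy
            (fun u _ => mul_nonneg (hmn u) (hφn u)))
        have hmono : ∫ t in t₀..y, m₀ t * φ t ≤ ∫ t in t₀..y, m₀ t * S := by
          refine intervalIntegral.integral_mono_on hyt₀ (hmφ_ii t₀ ht₀J y hyJ)
            ((hm_ii t₀ ht₀J y hyJ).mul_const S) ?_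
          intro u hu
          have huW : u ∈ W := ⟨hJo.out ht₀J hyJ hu, ⟨hu.1, hu.2.trans hyδ⟩⟩
          exact mul_le_mul_of_nonneg_left (hSle u huW) (hmn u)
        have hmS : ∫ t in t₀..y, m₀ t * S = (∫ t in t₀..y, m₀ t) * S :=
          intervalIntegral.integral_mul_const S m₀
        have hwin' : (∫ t in t₀..y, m₀ t) ≤ 1/2 := hwin t₀ y ht₀J hyJ hyt₀ (by linarith)
        have hfin : (∫ t in t₀..y, m₀ t) * S ≤ 1/2 * S :=
          mul_le_mul_of_nonneg_right hwin' hS0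
        calc φ y ≤ |∫ t in c..y, m₀ t * φ t| := hineq y hyJ
          _ = ∫ t in c..y, m₀ t * φ t := habs
          _ = (∫ t in c..t₀, m₀ t * φ t) + ∫ t in t₀..y, m₀ t * φ t := hsplit
          _ = ∫ t in t₀..y, m₀ t * φ t := by rw [hz]; ring
          _ ≤ ∫ t in t₀..y, m₀ t * S := hmono
          _ = (∫ t in t₀..y, m₀ t) * S := hmS
          _ ≤ 1/2 * S := hfin
      have hShalf : S ≤ 1/2 * S := by
        refine csSup_le hWne ?_
        rintro z ⟨y, hy, rfl⟩
        exact key y hy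
      have hSneg : S ≤ 0 := by linarith
      have hxW : x ∈ W := ⟨hx, ⟨ht₀x, hxt₀δ⟩⟩
      have := key x hxW
      have := hφn x
      linarith
  -- left-hand side (mirror)
  have hleft : ∀ n : ℕ, ∀ x ∈ J, x ≤ c → c - n * δ' ≤ x → φ x = 0 := by
    intro n
    induction n with
    | zero =>
      intro x hx hcx hxn
      have hxc : x = c := le_antisymm hcx (by simpa using hxn)
      subst hxc
      have := hineq x hx
      simp only [intervalIntegral.integral_same, abs_zero] at this
      exact le_antisymm this (hφn x)
    | succ n ih =>
      intro x hx hcx hxn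
      by_cases hxn' : c - n * δ' ≤ x
      · exact ih x hx hcx hxn'
      push_neg at hxn'
      set t₀ : ℝ := c - n * δ' with ht₀def
      have ht₀x : x ≤ t₀ := hxn'.le
      have hct₀ : t₀ ≤ c := by
        rw [ht₀def]; have : (0:ℝ) ≤ n * δ' := by positivity
        linarith
      have ht₀J : t₀ ∈ J := hJo.out hx hcJ ⟨ht₀x, hct₀⟩
      have hxt₀δ : t₀ - δ' ≤ x := by
        rw [ht₀def]
        push_cast at hxn
        linarith
      set W : Set ℝ := J ∩ Icc (t₀ - δ') t₀ with hWdef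
      have hWsub : W ⊆ J := inter_subset_left
      have hWc : IsCompact W := hJc.inter_right isClosed_Icc
      have ht₀W : t₀ ∈ W := ⟨ht₀J, ⟨by linarith, le_refl _⟩⟩
      have hWne : (φ '' W).Nonempty := ⟨φ t₀, t₀, ht₀W, rfl⟩
      have hbdd : BddAbove (φ '' W) :=
        (hWc.image_of_continuousOn (hφc.mono hWsub)).bddAbove
      set S : ℝ := sSup (φ '' W) with hSdef
      have hSle : ∀ y ∈ W, φ y ≤ S := fun y hy => le_csSup hbdd ⟨y, hy, rfl⟩
      have hS0 : 0 ≤ S := (hφn t₀).trans (hSle t₀ ht₀W)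
      have key : ∀ y ∈ W, φ y ≤ 1/2 * S := by
        rintro y ⟨hyJ, hyδ, hyt₀⟩
        have hcy : y ≤ c := hyt₀.trans hct₀
        have hsym : |∫ t in c..y, m₀ t * φ t| = |∫ t in y..c, m₀ t * φ t| := by
          rw [intervalIntegral.integral_symm]
          exact abs_neg _
        have hsplit : ∫ t in y..c, m₀ t * φ t
            = (∫ t in y..t₀, m₀ t * φ t) + ∫ t in t₀..c, m₀ t * φ t :=
          (intervalIntegral.integral_add_adjacent_intervals
            (hmφ_ii y hyJ t₀ ht₀J) (hmφ_ii t₀ ht₀J c hcJ)).symm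
        have hz : ∫ t in t₀..c, m₀ t * φ t = 0 := by
          have hEq : EqOn (fun t => m₀ t * φ t) (fun _ => (0:ℝ)) (uIcc t₀ c) := by
            intro t ht
            have htJ : t ∈ J := hJo.uIcc_subset ht₀J hcJ ht
            rw [uIcc_of_le hct₀] at ht
            have : φ t = 0 := ih t htJ ht.2 ht.1
            simp [this]
          rw [intervalIntegral.integral_congr hEq]
          simp
        have habs : |∫ t in y..c, m₀ t * φ t| = ∫ t in y..c, m₀ t * φ t :=
          abs_of_nonneg (intervalIntegral.integral_nonneg hcy
            (fun u _ => mul_nonneg (hmn u) (hφn u)))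
        have hmono : ∫ t in y..t₀, m₀ t * φ t ≤ ∫ t in y..t₀, m₀ t * S := by
          refine intervalIntegral.integral_mono_on hyt₀ (hmφ_ii y hyJ t₀ ht₀J)
            ((hm_ii y hyJ t₀ ht₀J).mul_const S) ?_
          intro u hu
          have huW : u ∈ W := ⟨hJo.out hyJ ht₀J hu, ⟨hyδ.trans hu.1, hu.2⟩⟩
          exact mul_le_mul_of_nonneg_left (hSle u huW) (hmn u)
        have hmS : ∫ t in y..t₀, m₀ t * S = (∫ t in y..t₀, m₀ t) * S :=
          intervalIntegral.integral_mul_const S m₀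
        have hwin' : (∫ t in y..t₀, m₀ t) ≤ 1/2 :=
          hwin y t₀ hyJ ht₀J hyt₀ (by linarith)
        have hfin : (∫ t in y..t₀, m₀ t) * S ≤ 1/2 * S :=
          mul_le_mul_of_nonneg_right hwin' hS0
        calc φ y ≤ |∫ t in c..y, m₀ t * φ t| := hineq y hyJ
          _ = |∫ t in y..c, m₀ t * φ t| := hsym
          _ = ∫ t in y..c, m₀ t * φ t := habs
          _ = (∫ t in y..t₀, m₀ t * φ t) + ∫ t in t₀..c, m₀ t * φ t := hsplit
          _ = ∫ t in y..t₀, m₀ t * φ t := by rw [hz]; ring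
          _ ≤ ∫ t in y..t₀, m₀ t * S := hmono
          _ = (∫ t in y..t₀, m₀ t) * S := hmS
          _ ≤ 1/2 * S := hfin
      have hShalf : S ≤ 1/2 * S := by
        refine csSup_le hWne ?_
        rintro z ⟨y, hy, rfl⟩
        exact key y hy
      have hSneg : S ≤ 0 := by linarith
      have hxW : x ∈ W := ⟨hx, ⟨hxt₀δ, ht₀x⟩⟩
      have := key x hxW
      have := hφn x
      linarith
  intro x hx
  rcases le_total c x with hcx | hcx
  · obtain ⟨n, hn⟩ := exists_nat_ge ((x - c) / δ')
    refine hright n x hx hcx ?_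
    rw [div_le_iff₀ hδ'0] at hn
    linarith
  · obtain ⟨n, hn⟩ := exists_nat_ge ((c - x) / δ')
    refine hleft n x hx hcx ?_
    rw [div_le_iff₀ hδ'0] at hn
    linarith

end IVPAux
namespace IVPAux

lemma sol_continuousOn (C : Co) {c d : ℝ} (hm : IntegrableOn C.m (uIcc c d) volume)
    (hh : IntegrableOn C.h0 (uIcc c d) volume) {u : ℝ → ℂ × ℂ}
    (hu : AEStronglyMeasurable u (volume.restrict (uIcc c d))) {Cb : ℝ}
    (hb : ∀ x ∈ uIcc c d, ‖u x‖ ≤ Cb) (ξ : ℂ × ℂ)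
    (heq : ∀ x ∈ uIcc c d, u x = ξ + ∫ t in c..x, C.F t (u t)) :
    ContinuousOn u (uIcc c d) :=
  cont_of_primitive (C.integrableOn_comp measurableSet_uIcc hu hb hm hh) ξ heq

lemma abs_intervalIntegral_mono {c x : ℝ} {f g : ℝ → ℝ} (hf : ∀ t, 0 ≤ f t)
    (hfg : ∀ t ∈ uIcc c x, f t ≤ g t) (hfi : IntervalIntegrable f volume c x)
    (hgi : IntervalIntegrable g volume c x) :
    |∫ t in c..x, f t| ≤ |∫ t in c..x, g t| := by
  rcases le_total c x with h | h
  · have hg0 : ∀ u ∈ Icc c x, (0:ℝ) ≤ g u := fun u hu =>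
      (hf u).trans (hfg u (by rw [uIcc_of_le h]; exact hu))
    rw [abs_of_nonneg (intervalIntegral.integral_nonneg h (fun u _ => hf u)),
      abs_of_nonneg (intervalIntegral.integral_nonneg h hg0)]
    exact intervalIntegral.integral_mono_on h hfi hgi
      (fun u hu => hfg u (by rw [uIcc_of_le h]; exact hu))
  · rw [show (∫ t in c..x, f t) = -∫ t in x..c, f t from intervalIntegral.integral_symm x c,
      show (∫ t in c..x, g t) = -∫ t in x..c, g t from intervalIntegral.integral_symm x c,
      abs_neg, abs_neg]
    have hg0 : ∀ u ∈ Icc x c, (0:ℝ) ≤ g u := fun u hu =>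
      (hf u).trans (hfg u (by rw [uIcc_of_ge h]; exact hu))
    rw [abs_of_nonneg (intervalIntegral.integral_nonneg h (fun u _ => hf u)),
      abs_of_nonneg (intervalIntegral.integral_nonneg h hg0)]
    exact intervalIntegral.integral_mono_on h hfi.symm hgi.symm
      (fun u hu => hfg u (by rw [uIcc_of_ge h]; exact hu))

lemma agree (C : Co) {c d : ℝ} (hm : IntegrableOn C.m (uIcc c d) volume)
    (hh : IntegrableOn C.h0 (uIcc c d) volume) {u v : ℝ → ℂ × ℂ}
    (huc : ContinuousOn u (uIcc c d)) (hvc : ContinuousOn v (uIcc c d)) (ξ : ℂ × ℂ)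
    (hue : ∀ x ∈ uIcc c d, u x = ξ + ∫ t in c..x, C.F t (u t))
    (hve : ∀ x ∈ uIcc c d, v x = ξ + ∫ t in c..x, C.F t (v t)) :
    EqOn u v (uIcc c d) := by
  have hJm : MeasurableSet (uIcc c d) := measurableSet_uIcc
  have hJo : OrdConnected (uIcc c d) := ordConnected_uIcc
  have hJc : IsCompact (uIcc c d) := isCompact_uIcc
  obtain ⟨Cu, hCu⟩ := hJc.exists_bound_of_continuousOn huc
  obtain ⟨Cv, hCv⟩ := hJc.exists_bound_of_continuousOn hvc
  have hFu : IntegrableOn (fun t => C.F t (u t)) (uIcc c d) volume :=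
    C.integrableOn_comp hJm (huc.aestronglyMeasurable hJm) hCu hm hh
  have hFv : IntegrableOn (fun t => C.F t (v t)) (uIcc c d) volume :=
    C.integrableOn_comp hJm (hvc.aestronglyMeasurable hJm) hCv hm hh
  have hφc : ContinuousOn (fun t => ‖u t - v t‖) (uIcc c d) := (huc.sub hvc).norm
  have hmφ : IntegrableOn (fun t => C.m t * ‖u t - v t‖) (uIcc c d) volume := by
    refine Integrable.mono' (hm.mul_const (Cu + Cv)) ?_ ?_
    · exact hm.aestronglyMeasurable.mul (hφc.aestronglyMeasurable hJm)
    · rw [ae_restrict_iff' hJm]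
      filter_upwards with t ht
      rw [Real.norm_eq_abs, abs_of_nonneg (mul_nonneg (C.m_nonneg t) (norm_nonneg _))]
      refine mul_le_mul_of_nonneg_left ?_ (C.m_nonneg t)
      exact (norm_sub_le _ _).trans (add_le_add (hCu t ht) (hCv t ht))
  have hFuv : IntegrableOn (fun t => C.F t (u t) - C.F t (v t)) (uIcc c d) volume := by
    have h := hFu.sub hFv
    exact h
  have hFuvn : IntegrableOn (fun t => ‖C.F t (u t) - C.F t (v t)‖) (uIcc c d) volume :=
    hFuv.norm
  have hineq : ∀ x ∈ uIcc c d, ‖u x - v x‖ ≤ |∫ t in c..x, C.m t * ‖u t - v t‖| := by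
    intro x hx
    have hsubJ : uIcc c x ⊆ uIcc c d := hJo.uIcc_subset left_mem_uIcc hx
    have hsub : u x - v x = ∫ t in c..x, (C.F t (u t) - C.F t (v t)) := by
      rw [hue x hx, hve x hx, add_sub_add_left_eq_sub]
      exact (intervalIntegral.integral_sub
        ((hFu.mono_set hsubJ).intervalIntegrable)
        ((hFv.mono_set hsubJ).intervalIntegrable)).symm
    rw [hsub]
    refine (intervalIntegral.norm_integral_le_abs_integral_norm).trans ?_
    refine abs_intervalIntegral_mono (fun t => norm_nonneg _)
      (fun t ht => C.norm_F_sub_F t (u t) (v t))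
      ((hFuvn.mono_set hsubJ).intervalIntegrable)
      ((hmφ.mono_set hsubJ).intervalIntegrable)
  intro x hx
  have := gronwall hm C.m_nonneg hφc (fun t => norm_nonneg _) hineq x hx
  exact sub_eq_zero.1 (norm_eq_zero.1 this)

lemma chainR (C : Co) {c d : ℝ} (hcd : c ≤ d) (hm : IntegrableOn C.m (Icc c d) volume)
    (hh : IntegrableOn C.h0 (Icc c d) volume) (ξ₀ : ℂ × ℂ) :
    ∃ u : ℝ → ℂ × ℂ, Measurable u ∧ (∃ Cb, ∀ x, ‖u x‖ ≤ Cb) ∧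
      ∀ x ∈ Icc c d, u x = ξ₀ + ∫ t in c..x, C.F t (u t) := by
  set mI : ℝ → ℝ := (Icc c d).indicator C.m with hmIdef
  have hmI : Integrable mI volume := (integrable_indicator_iff measurableSet_Icc).2 hm
  set M : ℝ → ℝ := fun x => ∫ t in c..x, mI t with hMdef
  have hMc : Continuous M := hmI.continuous_primitive c
  obtain ⟨δ, hδ0, hδ⟩ := Metric.uniformContinuousOn_iff_le.1
    ((isCompact_Icc (a := c) (b := d)).uniformContinuousOn_of_continuous hMc.continuousOn)
    (1/2) (by norm_num)
  set δ' : ℝ := δ / 2 with hδ'def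
  have hδ'0 : 0 < δ' := by positivity
  have hwin : ∀ t₀ t₁, c ≤ t₀ → t₀ ≤ t₁ → t₁ ≤ d → t₁ - t₀ ≤ δ' →
      ∫ t in Icc t₀ t₁, C.m t ≤ 1/2 := by
    intro t₀ t₁ h0 h01 h1 hlen
    have hmem0 : t₀ ∈ Icc c d := ⟨h0, h01.trans h1⟩
    have hmem1 : t₁ ∈ Icc c d := ⟨h0.trans h01, h1⟩
    have e1 : ∫ t in Icc t₀ t₁, C.m t = ∫ t in t₀..t₁, C.m t := by
      rw [intervalIntegral.integral_of_le h01, MeasureTheory.integral_Icc_eq_integral_Ioc]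
    have e2 : ∫ t in t₀..t₁, C.m t = ∫ t in t₀..t₁, mI t := by
      refine (intervalIntegral.integral_congr fun t ht => ?_).symm
      refine indicator_of_mem ?_ _
      rw [uIcc_of_le h01] at ht
      exact ⟨h0.trans ht.1, ht.2.trans h1⟩
    have e3 : ∫ t in t₀..t₁, mI t = M t₁ - M t₀ :=
      (intervalIntegral.integral_interval_sub_left hmI.intervalIntegrable
        hmI.intervalIntegrable).symm
    rw [e1, e2, e3]
    have := hδ t₁ hmem1 t₀ hmem0 (by rw [Real.dist_eq, abs_of_nonneg (by linarith)]; linarith)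
    rw [Real.dist_eq] at this
    exact (le_abs_self _).trans this
  set t : ℕ → ℝ := fun i => min (c + i * δ') d with htdef
  have ht0 : t 0 = c := by simp [htdef, hcd]
  have htmono : ∀ i, t i ≤ t (i+1) := by
    intro i
    refine min_le_min ?_ le_rfl
    push_cast
    nlinarith
  have htmem : ∀ i, t i ∈ Icc c d := by
    intro i
    constructor
    · refine le_min ?_ hcd
      have : (0:ℝ) ≤ i * δ' := by positivity
      linarith
    · exact min_le_right _ _
  have htlen : ∀ i, t (i+1) - t i ≤ δ' := by
    intro i
    simp only [htdef]
    rcases le_total (c + (i+1 : ℕ) * δ') d with h | h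
    · have h' : c + (i:ℝ) * δ' ≤ d := by push_cast at h ⊢; nlinarith
      rw [min_eq_left h, min_eq_left h']
      push_cast
      ring_nf
      nlinarith
    · rw [min_eq_right h]
      rcases le_total (c + (i:ℝ) * δ') d with h2 | h2
      · rw [min_eq_left h2]
        push_cast at h
        nlinarith
      · rw [min_eq_right h2]
        linarith
  have main : ∀ i : ℕ, ∃ u : ℝ → ℂ × ℂ, Measurable u ∧ (∃ Cb, ∀ x, ‖u x‖ ≤ Cb) ∧
      ∀ x ∈ Icc c (t i), u x = ξ₀ + ∫ s in c..x, C.F s (u s) := by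
    intro i
    induction i with
    | zero =>
      refine ⟨fun _ => ξ₀, measurable_const, ⟨‖ξ₀‖, fun x => le_refl _⟩, ?_⟩
      intro x hx
      rw [ht0] at hx
      have hxc : x = c := le_antisymm hx.2 hx.1
      subst hxc
      simp
    | succ i ih =>
      obtain ⟨u, hum, ⟨Cu, hCu⟩, hueq⟩ := ih
      have hsub1 : Icc (t i) (t (i+1)) ⊆ Icc c d :=
        Icc_subset_Icc (htmem i).1 (htmem (i+1)).2
      have hsmall : ∫ s in Icc (t i) (t (i+1)), C.m s ≤ 1/2 :=
        hwin (t i) (t (i+1)) (htmem i).1 (htmono i) (htmem (i+1)).2 (htlen i)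
      have htii : t i ∈ Icc (t i) (t (i+1)) := left_mem_Icc.2 (htmono i)
      obtain ⟨v, hvm, ⟨Cv, hCv⟩, hveq⟩ := loc_exists C (hm.mono_set hsub1)
        (hh.mono_set hsub1) hsmall htii (u (t i))
      have hvti : v (t i) = u (t i) := by
        have := hveq (t i) htii
        simpa using this
      set w : ℝ → ℂ × ℂ := fun x => if x ≤ t i then u x else v x with hwdef
      have hwm : Measurable w := Measurable.ite measurableSet_Iic hum hvm
      have hwb : ∀ x, ‖w x‖ ≤ max Cu Cv := by
        intro x
        by_cases hx : x ≤ t i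
        · rw [show w x = u x from if_pos hx]; exact le_max_of_le_left (hCu x)
        · rw [show w x = v x from if_neg hx]; exact le_max_of_le_right (hCv x)
      refine ⟨w, hwm, ⟨max Cu Cv, hwb⟩, ?_⟩
      intro x hx
      have hwu : EqOn (fun s => C.F s (w s)) (fun s => C.F s (u s)) (uIcc c (t i)) := by
        intro s hs
        rw [uIcc_of_le (htmem i).1] at hs
        have hws : w s = u s := if_pos hs.2
        simp only [hws]
      by_cases hxti : x ≤ t i
      · have h1 := hueq x ⟨hx.1, hxti⟩
        have hmemx : x ∈ uIcc c (t i) := by rw [uIcc_of_le (htmem i).1]; exact ⟨hx.1, hxti⟩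
        have h2 : ∫ s in c..x, C.F s (w s) = ∫ s in c..x, C.F s (u s) :=
          intervalIntegral.integral_congr (hwu.mono (uIcc_subset_uIcc left_mem_uIcc hmemx))
        rw [show w x = u x from if_pos hxti, h2]
        exact h1
      · push_neg at hxti
        have hwv : EqOn (fun s => C.F s (w s)) (fun s => C.F s (v s)) (uIcc (t i) x) := by
          intro s hs
          rw [uIcc_of_le hxti.le] at hs
          by_cases hsi : s ≤ t i
          · have hst : s = t i := le_antisymm hsi hs.1
            have hws : w s = v s := by
              rw [hst, show w (t i) = u (t i) from if_pos le_rfl, hvti]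
            simp only [hws]
          · have hws : w s = v s := if_neg hsi
            simp only [hws]
        have hsub2 : uIcc c (t i) ⊆ Icc c d := by
          rw [uIcc_of_le (htmem i).1]
          exact Icc_subset_Icc le_rfl (htmem i).2
        have hsub3 : uIcc (t i) x ⊆ Icc c d := by
          rw [uIcc_of_le hxti.le]
          exact Icc_subset_Icc (htmem i).1 (hx.2.trans (htmem (i+1)).2)
        have hFu_int : IntegrableOn (fun s => C.F s (u s)) (uIcc c (t i)) volume :=
          C.integrableOn_comp measurableSet_uIcc hum.aestronglyMeasurable.restrict
            (fun y _ => hCu y) (hm.mono_set hsub2) (hh.mono_set hsub2)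
        have hFv_int : IntegrableOn (fun s => C.F s (v s)) (uIcc (t i) x) volume :=
          C.integrableOn_comp measurableSet_uIcc hvm.aestronglyMeasurable.restrict
            (fun y _ => hCv y) (hm.mono_set hsub3) (hh.mono_set hsub3)
        have hFw1 : IntervalIntegrable (fun s => C.F s (w s)) volume c (t i) :=
          (hFu_int.congr_fun hwu.symm measurableSet_uIcc).intervalIntegrable
        have hFw2 : IntervalIntegrable (fun s => C.F s (w s)) volume (t i) x :=
          (hFv_int.congr_fun hwv.symm measurableSet_uIcc).intervalIntegrable
        have hsplit := intervalIntegral.integral_add_adjacent_intervals hFw1 hFw2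
        have e1 : ∫ s in c..(t i), C.F s (w s) = ∫ s in c..(t i), C.F s (u s) :=
          intervalIntegral.integral_congr hwu
        have e2 : ∫ s in (t i)..x, C.F s (w s) = ∫ s in (t i)..x, C.F s (v s) :=
          intervalIntegral.integral_congr hwv
        have h1 := hveq x ⟨hxti.le, hx.2⟩
        have h2 := hueq (t i) ⟨(htmem i).1, le_refl _⟩
        rw [show w x = v x from if_neg (not_le.2 hxti), h1, h2, ← hsplit, e1, e2]
        rw [add_assoc]
  obtain ⟨n, hn⟩ := exists_nat_ge ((d - c)/δ')
  have htn : t n = d := by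
    simp only [htdef]
    refine min_eq_right ?_
    rw [div_le_iff₀ hδ'0] at hn
    linarith
  obtain ⟨u, h1, h2, h3⟩ := main n
  rw [htn] at h3
  exact ⟨u, h1, h2, h3⟩

end IVPAux
namespace IVPAux

lemma chainL (C : Co) {l c : ℝ} (hlc : l ≤ c) (hm : IntegrableOn C.m (Icc l c) volume)
    (hh : IntegrableOn C.h0 (Icc l c) volume) (ξ₀ : ℂ × ℂ) :
    ∃ u : ℝ → ℂ × ℂ, Measurable u ∧ (∃ Cb, ∀ x, ‖u x‖ ≤ Cb) ∧
      ∀ x ∈ Icc l c, u x = ξ₀ + ∫ t in c..x, C.F t (u t) := by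
  set mI : ℝ → ℝ := (Icc l c).indicator C.m with hmIdef
  have hmI : Integrable mI volume := (integrable_indicator_iff measurableSet_Icc).2 hm
  set M : ℝ → ℝ := fun x => ∫ t in c..x, mI t with hMdef
  have hMc : Continuous M := hmI.continuous_primitive c
  obtain ⟨δ, hδ0, hδ⟩ := Metric.uniformContinuousOn_iff_le.1
    ((isCompact_Icc (a := l) (b := c)).uniformContinuousOn_of_continuous hMc.continuousOn)
    (1/2) (by norm_num)
  set δ' : ℝ := δ / 2 with hδ'def
  have hδ'0 : 0 < δ' := by positivity
  have hwin : ∀ t₀ t₁, l ≤ t₀ → t₀ ≤ t₁ → t₁ ≤ c → t₁ - t₀ ≤ δ' →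
      ∫ t in Icc t₀ t₁, C.m t ≤ 1/2 := by
    intro t₀ t₁ h0 h01 h1 hlen
    have hmem0 : t₀ ∈ Icc l c := ⟨h0, h01.trans h1⟩
    have hmem1 : t₁ ∈ Icc l c := ⟨h0.trans h01, h1⟩
    have e1 : ∫ t in Icc t₀ t₁, C.m t = ∫ t in t₀..t₁, C.m t := by
      rw [intervalIntegral.integral_of_le h01, MeasureTheory.integral_Icc_eq_integral_Ioc]
    have e2 : ∫ t in t₀..t₁, C.m t = ∫ t in t₀..t₁, mI t := by
      refine (intervalIntegral.integral_congr fun t ht => ?_).symm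
      refine indicator_of_mem ?_ _
      rw [uIcc_of_le h01] at ht
      exact ⟨h0.trans ht.1, ht.2.trans h1⟩
    have e3 : ∫ t in t₀..t₁, mI t = M t₁ - M t₀ :=
      (intervalIntegral.integral_interval_sub_left hmI.intervalIntegrable
        hmI.intervalIntegrable).symm
    rw [e1, e2, e3]
    have := hδ t₁ hmem1 t₀ hmem0 (by rw [Real.dist_eq, abs_of_nonneg (by linarith)]; linarith)
    rw [Real.dist_eq] at this
    exact (le_abs_self _).trans this
  set t : ℕ → ℝ := fun i => max (c - i * δ') l with htdef
  have ht0 : t 0 = c := by simp [htdef, hlc]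
  have htmono : ∀ i, t (i+1) ≤ t i := by
    intro i
    refine max_le_max ?_ le_rfl
    push_cast
    nlinarith
  have htmem : ∀ i, t i ∈ Icc l c := by
    intro i
    constructor
    · exact le_max_right _ _
    · refine max_le ?_ hlc
      have : (0:ℝ) ≤ i * δ' := by positivity
      linarith
  have htlen : ∀ i, t i - t (i+1) ≤ δ' := by
    intro i
    simp only [htdef]
    rcases le_total l (c - (i+1 : ℕ) * δ') with h | h
    · have h' : l ≤ c - (i:ℝ) * δ' := by push_cast at h ⊢; nlinarith
      rw [max_eq_left h, max_eq_left h']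
      push_cast
      ring_nf
      nlinarith
    · rw [max_eq_right h]
      rcases le_total l (c - (i:ℝ) * δ') with h2 | h2
      · rw [max_eq_left h2]
        push_cast at h
        nlinarith
      · rw [max_eq_right h2]
        linarith
  have main : ∀ i : ℕ, ∃ u : ℝ → ℂ × ℂ, Measurable u ∧ (∃ Cb, ∀ x, ‖u x‖ ≤ Cb) ∧
      ∀ x ∈ Icc (t i) c, u x = ξ₀ + ∫ s in c..x, C.F s (u s) := by
    intro i
    induction i with
    | zero =>
      refine ⟨fun _ => ξ₀, measurable_const, ⟨‖ξ₀‖, fun x => le_refl _⟩, ?_⟩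
      intro x hx
      rw [ht0] at hx
      have hxc : x = c := le_antisymm hx.2 hx.1
      subst hxc
      simp
    | succ i ih =>
      obtain ⟨u, hum, ⟨Cu, hCu⟩, hueq⟩ := ih
      have hsub1 : Icc (t (i+1)) (t i) ⊆ Icc l c :=
        Icc_subset_Icc (htmem (i+1)).1 (htmem i).2
      have hsmall : ∫ s in Icc (t (i+1)) (t i), C.m s ≤ 1/2 :=
        hwin (t (i+1)) (t i) (htmem (i+1)).1 (htmono i) (htmem i).2 (htlen i)
      have htii : t i ∈ Icc (t (i+1)) (t i) := right_mem_Icc.2 (htmono i)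
      obtain ⟨v, hvm, ⟨Cv, hCv⟩, hveq⟩ := loc_exists C (hm.mono_set hsub1)
        (hh.mono_set hsub1) hsmall htii (u (t i))
      have hvti : v (t i) = u (t i) := by
        have := hveq (t i) htii
        simpa using this
      set w : ℝ → ℂ × ℂ := fun x => if t i ≤ x then u x else v x with hwdef
      have hwm : Measurable w := Measurable.ite measurableSet_Ici hum hvm
      have hwb : ∀ x, ‖w x‖ ≤ max Cu Cv := by
        intro x
        by_cases hx : t i ≤ x
        · rw [show w x = u x from if_pos hx]; exact le_max_of_le_left (hCu x)
        · rw [show w x = v x from if_neg hx]; exact le_max_of_le_right (hCv x)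
      refine ⟨w, hwm, ⟨max Cu Cv, hwb⟩, ?_⟩
      intro x hx
      have hwu : EqOn (fun s => C.F s (w s)) (fun s => C.F s (u s)) (uIcc c (t i)) := by
        intro s hs
        rw [uIcc_of_ge (htmem i).2] at hs
        have hws : w s = u s := if_pos hs.1
        simp only [hws]
      by_cases hxti : t i ≤ x
      · have h1 := hueq x ⟨hxti, hx.2⟩
        have hmemx : x ∈ uIcc c (t i) := by rw [uIcc_of_ge (htmem i).2]; exact ⟨hxti, hx.2⟩
        have h2 : ∫ s in c..x, C.F s (w s) = ∫ s in c..x, C.F s (u s) :=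
          intervalIntegral.integral_congr (hwu.mono (uIcc_subset_uIcc left_mem_uIcc hmemx))
        rw [show w x = u x from if_pos hxti, h2]
        exact h1
      · push_neg at hxti
        have hwv : EqOn (fun s => C.F s (w s)) (fun s => C.F s (v s)) (uIcc (t i) x) := by
          intro s hs
          rw [uIcc_of_ge hxti.le] at hs
          by_cases hsi : t i ≤ s
          · have hst : s = t i := le_antisymm hs.2 hsi
            have hws : w s = v s := by
              rw [hst, show w (t i) = u (t i) from if_pos le_rfl, hvti]
            simp only [hws]
          · have hws : w s = v s := if_neg hsi
            simp only [hws]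
        have hsub2 : uIcc c (t i) ⊆ Icc l c := by
          rw [uIcc_of_ge (htmem i).2]
          exact Icc_subset_Icc (htmem i).1 le_rfl
        have hsub3 : uIcc (t i) x ⊆ Icc l c := by
          rw [uIcc_of_ge hxti.le]
          exact Icc_subset_Icc ((htmem (i+1)).1.trans hx.1) (htmem i).2
        have hFu_int : IntegrableOn (fun s => C.F s (u s)) (uIcc c (t i)) volume :=
          C.integrableOn_comp measurableSet_uIcc hum.aestronglyMeasurable.restrict
            (fun y _ => hCu y) (hm.mono_set hsub2) (hh.mono_set hsub2)
        have hFv_int : IntegrableOn (fun s => C.F s (v s)) (uIcc (t i) x) volume :=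
          C.integrableOn_comp measurableSet_uIcc hvm.aestronglyMeasurable.restrict
            (fun y _ => hCv y) (hm.mono_set hsub3) (hh.mono_set hsub3)
        have hFw1 : IntervalIntegrable (fun s => C.F s (w s)) volume c (t i) :=
          (hFu_int.congr_fun hwu.symm measurableSet_uIcc).intervalIntegrable
        have hFw2 : IntervalIntegrable (fun s => C.F s (w s)) volume (t i) x :=
          (hFv_int.congr_fun hwv.symm measurableSet_uIcc).intervalIntegrable
        have hsplit := intervalIntegral.integral_add_adjacent_intervals hFw1 hFw2
        have e1 : ∫ s in c..(t i), C.F s (w s) = ∫ s in c..(t i), C.F s (u s) :=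
          intervalIntegral.integral_congr hwu
        have e2 : ∫ s in (t i)..x, C.F s (w s) = ∫ s in (t i)..x, C.F s (v s) :=
          intervalIntegral.integral_congr hwv
        have h1 := hveq x ⟨hx.1, hxti.le⟩
        have h2 := hueq (t i) ⟨le_refl _, (htmem i).2⟩
        rw [show w x = v x from if_neg (not_le.2 hxti), h1, h2, ← hsplit, e1, e2]
        rw [add_assoc]
  obtain ⟨n, hn⟩ := exists_nat_ge ((c - l)/δ')
  have htn : t n = l := by
    simp only [htdef]
    refine max_eq_right ?_
    rw [div_le_iff₀ hδ'0] at hn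
    linarith
  obtain ⟨u, h1, h2, h3⟩ := main n
  rw [htn] at h3
  exact ⟨u, h1, h2, h3⟩

lemma chain (C : Co) {c : ℝ} (d : ℝ) (hm : IntegrableOn C.m (uIcc c d) volume)
    (hh : IntegrableOn C.h0 (uIcc c d) volume) (ξ₀ : ℂ × ℂ) :
    ∃ u : ℝ → ℂ × ℂ, Measurable u ∧ (∃ Cb, ∀ x, ‖u x‖ ≤ Cb) ∧
      ∀ x ∈ uIcc c d, u x = ξ₀ + ∫ t in c..x, C.F t (u t) := by
  rcases le_total c d with h | h
  · rw [uIcc_of_le h] at hm hh ⊢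
    exact chainR C h hm hh ξ₀
  · rw [uIcc_of_ge h] at hm hh ⊢
    exact chainL C h hm hh ξ₀

lemma global (C : Co) {I : Set ℝ} (hIo : OrdConnected I) {c : ℝ} (hc : c ∈ I)
    (hm : ∀ d ∈ I, IntegrableOn C.m (uIcc c d) volume)
    (hh : ∀ d ∈ I, IntegrableOn C.h0 (uIcc c d) volume) (ξ₀ : ℂ × ℂ) :
    ∃ sol : ℝ → ℂ × ℂ, sol c = ξ₀ ∧
      (∀ x ∈ I, sol x = ξ₀ + ∫ t in c..x, C.F t (sol t)) ∧
      (∀ d ∈ I, IntegrableOn (fun t => C.F t (sol t)) (uIcc c d) volume) ∧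
      (∀ d ∈ I, ContinuousOn sol (uIcc c d)) ∧
      (∀ (v : ℝ → ℂ × ℂ) (d : ℝ), d ∈ I → ContinuousOn v (uIcc c d) →
        (∀ x ∈ uIcc c d, v x = ξ₀ + ∫ t in c..x, C.F t (v t)) →
        EqOn v sol (uIcc c d)) := by
  have hch : ∀ d, d ∈ I → ∃ u : ℝ → ℂ × ℂ, Measurable u ∧ (∃ Cb, ∀ x, ‖u x‖ ≤ Cb) ∧
      ∀ x ∈ uIcc c d, u x = ξ₀ + ∫ t in c..x, C.F t (u t) :=
    fun d hd => chain C d (hm d hd) (hh d hd) ξ₀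
  choose! U hUm hUb hUeq using hch
  have hUcont : ∀ d ∈ I, ContinuousOn (U d) (uIcc c d) := by
    intro d hd
    obtain ⟨Cb, hCb⟩ := hUb d hd
    exact sol_continuousOn C (hm d hd) (hh d hd) ((hUm d hd).aestronglyMeasurable.restrict)
      (fun x _ => hCb x) ξ₀ (hUeq d hd)
  set sol : ℝ → ℂ × ℂ := fun x => U x x with hsoldef
  have hagree : ∀ d ∈ I, ∀ y ∈ uIcc c d, sol y = U d y := by
    intro d hd y hy
    have hyI : y ∈ I := hIo.uIcc_subset hc hd hy
    have hsub : uIcc c y ⊆ uIcc c d := uIcc_subset_uIcc left_mem_uIcc hy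
    have h2 : ∀ x ∈ uIcc c y, U d x = ξ₀ + ∫ t in c..x, C.F t (U d t) :=
      fun x hx => hUeq d hd x (hsub hx)
    have := agree C (hm y hyI) (hh y hyI) (hUcont y hyI) ((hUcont d hd).mono hsub) ξ₀
      (hUeq y hyI) h2
    exact this right_mem_uIcc
  have hsolc : sol c = ξ₀ := by
    have := hUeq c hc c left_mem_uIcc
    simpa using this
  have hinteg : ∀ d ∈ I, IntegrableOn (fun t => C.F t (sol t)) (uIcc c d) volume := by
    intro d hd
    obtain ⟨Cb, hCb⟩ := hUb d hd
    have hFU : IntegrableOn (fun t => C.F t (U d t)) (uIcc c d) volume :=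
      C.integrableOn_comp measurableSet_uIcc (hUm d hd).aestronglyMeasurable.restrict
        (fun x _ => hCb x) (hm d hd) (hh d hd)
    refine hFU.congr_fun ?_ measurableSet_uIcc
    intro x hx
    show C.F x (U d x) = C.F x (sol x)
    rw [hagree d hd x hx]
  have hconts : ∀ d ∈ I, ContinuousOn sol (uIcc c d) := fun d hd =>
    (hUcont d hd).congr (fun y hy => hagree d hd y hy)
  have heq : ∀ x ∈ I, sol x = ξ₀ + ∫ t in c..x, C.F t (sol t) := by
    intro x hx
    have h1 := hUeq x hx x right_mem_uIcc
    have h2 : ∫ t in c..x, C.F t (U x t) = ∫ t in c..x, C.F t (sol t) :=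
      intervalIntegral.integral_congr (fun s hs => by rw [hagree x hx s hs])
    exact h1.trans (by rw [h2])
  have huniq : ∀ (v : ℝ → ℂ × ℂ) (d : ℝ), d ∈ I → ContinuousOn v (uIcc c d) →
      (∀ x ∈ uIcc c d, v x = ξ₀ + ∫ t in c..x, C.F t (v t)) →
      EqOn v sol (uIcc c d) := by
    intro v d hd hvc hve
    have hEq := agree C (hm d hd) (hh d hd) hvc (hUcont d hd) ξ₀ hve (hUeq d hd)
    intro y hy
    exact (hEq hy).trans (hagree d hd y hy).symm
  exact ⟨sol, hsolc, heq, hinteg, hconts, huniq⟩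

end IVPAux

namespace IVPAux

lemma integrableOn_uIcc_of_intervalIntegrable {E : Type*} [NormedAddCommGroup E]
    {f : ℝ → E} {a b : ℝ} (h : IntervalIntegrable f volume a b) :
    IntegrableOn f (uIcc a b) volume := by
  rw [intervalIntegrable_iff] at h
  have h0 : IntegrableOn f {min a b} volume := by
    have hz : volume.restrict ({min a b} : Set ℝ) = 0 := by
      rw [Measure.restrict_eq_zero]
      exact measure_singleton _
    rw [IntegrableOn, hz]
    exact integrable_zero_measure
  have hsub : uIcc a b ⊆ Set.uIoc a b ∪ {min a b} := by
    intro x hx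
    rcases eq_or_ne x (min a b) with h' | h'
    · right; simp [h']
    · left
      refine ⟨lt_of_le_of_ne hx.1 (Ne.symm h'), hx.2⟩
  exact (h.union h0).mono_set hsub

lemma intervalIntegrable_conj {f : ℝ → ℂ} {a b : ℝ} (h : IntervalIntegrable f volume a b) :
    IntervalIntegrable (fun t => (starRingEnd ℂ) (f t)) volume a b := by
  rw [intervalIntegrable_iff] at h ⊢
  refine h.norm.mono' (continuous_star.comp_aestronglyMeasurable h.aestronglyMeasurable) ?_
  filter_upwards with t
  simp

lemma intervalIntegral_conj {f : ℝ → ℂ} {a b : ℝ} (h : IntervalIntegrable f volume a b) :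
    ∫ t in a..b, (starRingEnd ℂ) (f t) = (starRingEnd ℂ) (∫ t in a..b, f t) := by
  have h2 := ContinuousLinearMap.intervalIntegral_comp_comm
    (Complex.conjCLE : ℂ ≃L[ℝ] ℂ).toContinuousLinearMap h
  simpa using h2

end IVPAux

/-- Theorem 2.3 (existence and uniqueness for the initial value problem): if
`g ∈ L¹_loc((a,b); r dx)`, `z ∈ ℂ`, `c ∈ (a,b)`, and `α, β ∈ ℂ`, then there is a unique
`f ∈ 𝔇_τ` with `(τ - z) f = g` a.e. on `(a,b)`, `f(c) = α`, and `f^[1](c) = β`; if `g`,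
`α`, `β`, `z` are real-valued, then `f` is real-valued. -/
theorem ivp_existence_uniqueness
    (a b : EReal) (p q r s : ℝ → ℝ) (H : SLH a b p q r s)
    (g : ℝ → ℂ)
    (hg : LocallyIntegrableOn (fun x => (r x : ℂ) * g x) (EI a b) volume)
    (z : ℂ) (c : ℝ) (hc : c ∈ EI a b) (α β : ℂ) :
    ∃ f fd f1 f1d : ℝ → ℂ,
      InDomTauC (EI a b) p s f fd f1 f1d ∧
      (∀ᵐ t ∂(volume : Measure ℝ), t ∈ EI a b →
        tauAppC q r s f f1 f1d t - z * f t = g t) ∧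
      f c = α ∧ f1 c = β ∧
      (∀ f' fd' f1' f1d' : ℝ → ℂ,
        InDomTauC (EI a b) p s f' fd' f1' f1d' →
        (∀ᵐ t ∂(volume : Measure ℝ), t ∈ EI a b →
          tauAppC q r s f' f1' f1d' t - z * f' t = g t) →
        f' c = α → f1' c = β →
        Set.EqOn f' f (EI a b) ∧ Set.EqOn f1' f1 (EI a b)) ∧
      ((∀ x ∈ EI a b, (g x).im = 0) → z.im = 0 → α.im = 0 → β.im = 0 →
        ∀ x ∈ EI a b, (f x).im = 0) := by
  classical
  have hIm : MeasurableSet (EI a b) := by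
    have hEI : EI a b = ((↑) : ℝ → EReal) ⁻¹' (Ioi a ∩ Iio b) := rfl
    rw [hEI]
    exact ((isOpen_Ioi.inter isOpen_Iio).preimage continuous_coe_real_ereal).measurableSet
  have hIo : OrdConnected (EI a b) := by
    constructor
    intro x hx y hy t ht
    exact ⟨lt_of_lt_of_le hx.1 (EReal.coe_le_coe_iff.2 ht.1),
      lt_of_le_of_lt (EReal.coe_le_coe_iff.2 ht.2) hy.2⟩
  -- measurable representative of r·g
  have hrgm : AEStronglyMeasurable (fun x => (r x : ℂ) * g x) (volume.restrict (EI a b)) :=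
    hg.aestronglyMeasurable
  set G : ℝ → ℂ := hrgm.mk _ with hGdef
  have hGm : Measurable G := hrgm.stronglyMeasurable_mk.measurable
  have hGae : (fun x => (r x : ℂ) * g x) =ᵐ[volume.restrict (EI a b)] G := hrgm.ae_eq_mk
  have hG' : ∀ᵐ t ∂(volume : Measure ℝ), t ∈ EI a b → (r t : ℂ) * g t = G t :=
    (ae_restrict_iff' hIm).1 hGae
  -- the coefficient package
  set C : Co :=
    { a11 := fun t => -((s t : ℂ))
      a12 := fun t => (((p t)⁻¹ : ℝ) : ℂ)
      a21 := fun t => ((q t : ℂ)) - z * ((r t : ℂ))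
      a22 := fun t => ((s t : ℂ))
      h0 := fun t => -(G t)
      m11 := (Complex.measurable_ofReal.comp H.meass).neg
      m12 := Complex.measurable_ofReal.comp H.measp.inv
      m21 := (Complex.measurable_ofReal.comp H.measq).sub
        ((Complex.measurable_ofReal.comp H.measr).const_mul z)
      m22 := Complex.measurable_ofReal.comp H.meass
      mh0 := hGm.neg } with hCdef
  -- integrability of the coefficient data on compact subintervals
  have hmint : ∀ d ∈ EI a b, IntegrableOn C.m (uIcc c d) volume := by
    intro d hd
    have hK : uIcc c d ⊆ EI a b := hIo.uIcc_subset hc hd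
    have h1 : IntegrableOn (fun x => 1 / p x) (uIcc c d) volume :=
      H.invp_loc.integrableOn_compact_subset hK isCompact_uIcc
    have h2 : IntegrableOn q (uIcc c d) volume :=
      H.q_loc.integrableOn_compact_subset hK isCompact_uIcc
    have h3 : IntegrableOn r (uIcc c d) volume :=
      H.r_loc.integrableOn_compact_subset hK isCompact_uIcc
    have h4 : IntegrableOn s (uIcc c d) volume :=
      H.s_loc.integrableOn_compact_subset hK isCompact_uIcc
    refine Integrable.mono'
      (((h4.abs.add h1.abs).add (h2.abs.add (h3.abs.const_mul ‖z‖))).add h4.abs)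
      (C.measurable_m.aestronglyMeasurable.restrict) ?_
    filter_upwards with t
    rw [Real.norm_eq_abs, abs_of_nonneg (C.m_nonneg t)]
    have b1 : ‖C.a11 t‖ = |s t| := by
      simp [hCdef, Complex.norm_real, Real.norm_eq_abs]
    have b2 : ‖C.a12 t‖ = |1 / p t| := by
      simp [hCdef, Complex.norm_real, Real.norm_eq_abs, one_div, abs_inv]
    have b3 : ‖C.a21 t‖ ≤ |q t| + ‖z‖ * |r t| := by
      refine (norm_sub_le _ _).trans ?_
      simp [hCdef, Complex.norm_real, Real.norm_eq_abs, norm_mul]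
    have b4 : ‖C.a22 t‖ = |s t| := by
      simp [hCdef, Complex.norm_real, Real.norm_eq_abs]
    have hm_eq : C.m t = ‖C.a11 t‖ + ‖C.a12 t‖ + ‖C.a21 t‖ + ‖C.a22 t‖ := rfl
    rw [hm_eq, b1, b2, b4]
    have : (fun t => |s t| + |1 / p t| + (|q t| + ‖z‖ * |r t|) + |s t|) t
        = |s t| + |1 / p t| + (|q t| + ‖z‖ * |r t|) + |s t| := rfl
    simp only [Pi.add_apply]
    linarith
  have hhint : ∀ d ∈ EI a b, IntegrableOn C.h0 (uIcc c d) volume := by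
    intro d hd
    have hK : uIcc c d ⊆ EI a b := hIo.uIcc_subset hc hd
    have h5 : IntegrableOn (fun x => (r x : ℂ) * g x) (uIcc c d) volume :=
      hg.integrableOn_compact_subset hK isCompact_uIcc
    have h6 : IntegrableOn G (uIcc c d) volume :=
      h5.congr_fun_ae (ae_restrict_of_ae_restrict_of_subset hK hGae)
    have : IntegrableOn (fun t => -(G t)) (uIcc c d) volume := h6.neg
    exact this
  -- the global solution
  obtain ⟨sol, hsolc, hsoleq, hinteg, hconts, huniqS⟩ :=
    IVPAux.global C hIo hc hmint hhint (α, β)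
  set f : ℝ → ℂ := fun t => (sol t).1 with hfdef
  set f1 : ℝ → ℂ := fun t => (sol t).2 with hf1def
  set fd : ℝ → ℂ := fun t => C.a11 t * f t + C.a12 t * f1 t with hfddef
  set f1d : ℝ → ℂ := fun t => C.a21 t * f t + C.a22 t * f1 t + C.h0 t with hf1ddef
  have hF1 : ∀ t, (C.F t (sol t)).1 = fd t := fun t => rfl
  have hF2 : ∀ t, (C.F t (sol t)).2 = f1d t := fun t => rfl
  -- componentwise integrability
  have hfd_int : ∀ d ∈ EI a b, IntervalIntegrable fd volume c d := by
    intro d hd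
    have h7 := (ContinuousLinearMap.fst ℂ ℂ ℂ).integrable_comp (hinteg d hd)
    have h8 : IntegrableOn fd (uIcc c d) volume := by
      refine h7.congr ?_
      filter_upwards with t
      exact hF1 t
    exact h8.intervalIntegrable
  have hf1d_int : ∀ d ∈ EI a b, IntervalIntegrable f1d volume c d := by
    intro d hd
    have h7 := (ContinuousLinearMap.snd ℂ ℂ ℂ).integrable_comp (hinteg d hd)
    have h8 : IntegrableOn f1d (uIcc c d) volume := by
      refine h7.congr ?_
      filter_upwards with t
      exact hF2 t
    exact h8.intervalIntegrable
  -- componentwise equations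
  have hfeq : ∀ x ∈ EI a b, f x = α + ∫ t in c..x, fd t := by
    intro x hx
    have h0 := hsoleq x hx
    have h2 := (ContinuousLinearMap.fst ℂ ℂ ℂ).intervalIntegral_comp_comm
      ((hinteg x hx).intervalIntegrable)
    have h3 : ∫ t in c..x, fd t = (∫ t in c..x, C.F t (sol t)).1 := by
      calc ∫ t in c..x, fd t
          = ∫ t in c..x, (ContinuousLinearMap.fst ℂ ℂ ℂ) (C.F t (sol t)) :=
            intervalIntegral.integral_congr fun t _ => (hF1 t).symm
        _ = (ContinuousLinearMap.fst ℂ ℂ ℂ) (∫ t in c..x, C.F t (sol t)) := h2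
        _ = (∫ t in c..x, C.F t (sol t)).1 := rfl
    show (sol x).1 = α + ∫ t in c..x, fd t
    rw [h0, h3]
    rfl
  have hf1eq : ∀ x ∈ EI a b, f1 x = β + ∫ t in c..x, f1d t := by
    intro x hx
    have h0 := hsoleq x hx
    have h2 := (ContinuousLinearMap.snd ℂ ℂ ℂ).intervalIntegral_comp_comm
      ((hinteg x hx).intervalIntegrable)
    have h3 : ∫ t in c..x, f1d t = (∫ t in c..x, C.F t (sol t)).2 := by
      calc ∫ t in c..x, f1d t
          = ∫ t in c..x, (ContinuousLinearMap.snd ℂ ℂ ℂ) (C.F t (sol t)) :=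
            intervalIntegral.integral_congr fun t _ => (hF2 t).symm
        _ = (ContinuousLinearMap.snd ℂ ℂ ℂ) (∫ t in c..x, C.F t (sol t)) := h2
        _ = (∫ t in c..x, C.F t (sol t)).2 := rfl
    show (sol x).2 = β + ∫ t in c..x, f1d t
    rw [h0, h3]
    rfl
  have hDf : HasAEDerivOnC (EI a b) f fd := by
    intro x hx y hy
    refine ⟨((hfd_int x hx).symm).trans (hfd_int y hy), ?_⟩
    rw [hfeq y hy, hfeq x hx, add_sub_add_left_eq_sub]
    exact (intervalIntegral.integral_interval_sub_left (hfd_int y hy) (hfd_int x hx))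
  have hDf1 : HasAEDerivOnC (EI a b) f1 f1d := by
    intro x hx y hy
    refine ⟨((hf1d_int x hx).symm).trans (hf1d_int y hy), ?_⟩
    rw [hf1eq y hy, hf1eq x hx, add_sub_add_left_eq_sub]
    exact (intervalIntegral.integral_interval_sub_left (hf1d_int y hy) (hf1d_int x hx))
  have hquasi : ∀ᵐ t ∂(volume : Measure ℝ), t ∈ EI a b →
      f1 t = (p t : ℂ) * (fd t + (s t : ℂ) * f t) := by
    filter_upwards [H.ppos] with t hp ht
    have hpt : (p t : ℂ) ≠ 0 := Complex.ofReal_ne_zero.2 (hp ht).ne'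
    rw [hfddef]
    simp only [hCdef]
    push_cast
    field_simp
    ring
  have htauf : ∀ᵐ t ∂(volume : Measure ℝ), t ∈ EI a b →
      tauAppC q r s f f1 f1d t - z * f t = g t := by
    filter_upwards [H.rpos, hG'] with t hr hG2 ht
    have hrt : (r t : ℂ) ≠ 0 := Complex.ofReal_ne_zero.2 (hr ht).ne'
    have h2 := hG2 ht
    rw [tauAppC, hf1ddef]
    simp only [hCdef]
    rw [← h2]
    field_simp
    ring
  have hfc : f c = α := by
    show (sol c).1 = α
    rw [hsolc]
  have hf1c : f1 c = β := by
    show (sol c).2 = β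
    rw [hsolc]
  -- uniqueness
  have huniq_main : ∀ f' fd' f1' f1d' : ℝ → ℂ,
      InDomTauC (EI a b) p s f' fd' f1' f1d' →
      (∀ᵐ t ∂(volume : Measure ℝ), t ∈ EI a b →
        tauAppC q r s f' f1' f1d' t - z * f' t = g t) →
      f' c = α → f1' c = β →
      Set.EqOn f' f (EI a b) ∧ Set.EqOn f1' f1 (EI a b) := by
    rintro f' fd' f1' f1d' ⟨hD1, hQ, hD2⟩ htau' hic1 hic2
    have hae1 : ∀ᵐ t ∂(volume : Measure ℝ), t ∈ EI a b →
        fd' t = C.a11 t * f' t + C.a12 t * f1' t := by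
      filter_upwards [H.ppos, hQ] with t hp hq ht
      have hpt : (p t : ℂ) ≠ 0 := Complex.ofReal_ne_zero.2 (hp ht).ne'
      have h1 := hq ht
      show fd' t = -((s t : ℂ)) * f' t + (((p t)⁻¹ : ℝ) : ℂ) * f1' t
      rw [h1]
      push_cast
      field_simp
      ring
    have hae2 : ∀ᵐ t ∂(volume : Measure ℝ), t ∈ EI a b →
        f1d' t = C.a21 t * f' t + C.a22 t * f1' t + C.h0 t := by
      filter_upwards [H.rpos, htau', hG'] with t hr ht2 hG2 ht
      have hrt : (r t : ℂ) ≠ 0 := Complex.ofReal_ne_zero.2 (hr ht).ne'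
      have h1 := ht2 ht
      rw [tauAppC] at h1
      have h2 := hG2 ht
      have h5 : (1 / (r t : ℂ)) * (-(f1d' t) + (s t : ℂ) * f1' t + (q t : ℂ) * f' t)
          = g t + z * f' t := by linear_combination h1
      have h3 : -(f1d' t) + (s t : ℂ) * f1' t + (q t : ℂ) * f' t
          = (r t : ℂ) * (g t + z * f' t) := by
        rw [← h5]
        field_simp
      show f1d' t = ((q t : ℂ) - z * (r t : ℂ)) * f' t + (s t : ℂ) * f1' t + -(G t)
      rw [← h2]
      linear_combination -h3
    have hkey : ∀ d ∈ EI a b, f' d = f d ∧ f1' d = f1 d := by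
      intro d hd
      have hsubI : uIcc c d ⊆ EI a b := hIo.uIcc_subset hc hd
      have hint1 : IntegrableOn fd' (uIcc c d) volume :=
        IVPAux.integrableOn_uIcc_of_intervalIntegrable (hD1 c hc d hd).1
      have hint2 : IntegrableOn f1d' (uIcc c d) volume :=
        IVPAux.integrableOn_uIcc_of_intervalIntegrable (hD2 c hc d hd).1
      have hrep1 : ∀ x ∈ uIcc c d, f' x = α + ∫ t in c..x, fd' t := by
        intro x hx
        have hxI : x ∈ EI a b := hsubI hx
        have h5 := (hD1 c hc x hxI).2
        have h6 : f' x = f' c + ∫ t in c..x, fd' t := by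
          have := sub_eq_iff_eq_add'.1 h5
          exact this
        rw [h6, hic1]
      have hrep2 : ∀ x ∈ uIcc c d, f1' x = β + ∫ t in c..x, f1d' t := by
        intro x hx
        have hxI : x ∈ EI a b := hsubI hx
        have h5 := (hD2 c hc x hxI).2
        have h6 : f1' x = f1' c + ∫ t in c..x, f1d' t := by
          have := sub_eq_iff_eq_add'.1 h5
          exact this
        rw [h6, hic2]
      have hc1 : ContinuousOn f' (uIcc c d) := IVPAux.cont_of_primitive hint1 α hrep1
      have hc2 : ContinuousOn f1' (uIcc c d) := IVPAux.cont_of_primitive hint2 β hrep2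
      set v : ℝ → ℂ × ℂ := fun t => (f' t, f1' t) with hvdef
      have hvc : ContinuousOn v (uIcc c d) := hc1.prodMk hc2
      obtain ⟨Cv, hCv⟩ := isCompact_uIcc.exists_bound_of_continuousOn hvc
      have hFv : IntegrableOn (fun t => C.F t (v t)) (uIcc c d) volume :=
        C.integrableOn_comp measurableSet_uIcc (hvc.aestronglyMeasurable measurableSet_uIcc)
          hCv (hmint d hd) (hhint d hd)
      have hveq : ∀ x ∈ uIcc c d, v x = (α, β) + ∫ t in c..x, C.F t (v t) := by
        intro x hx
        have hxI : x ∈ EI a b := hsubI hx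
        have hsub2 : uIcc c x ⊆ uIcc c d := uIcc_subset_uIcc left_mem_uIcc hx
        have hFvx : IntervalIntegrable (fun t => C.F t (v t)) volume c x :=
          (hFv.mono_set hsub2).intervalIntegrable
        have hcomm1 := (ContinuousLinearMap.fst ℂ ℂ ℂ).intervalIntegral_comp_comm hFvx
        have hcomm2 := (ContinuousLinearMap.snd ℂ ℂ ℂ).intervalIntegral_comp_comm hFvx
        have hiu : Set.uIoc c x ⊆ EI a b := uIoc_subset_uIcc.trans (hIo.uIcc_subset hc hxI)
        have he1 : ∫ t in c..x, fd' t = ∫ t in c..x, (C.F t (v t)).1 := by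
          refine intervalIntegral.integral_congr_ae ?_
          filter_upwards [hae1] with t h ht
          exact h (hiu ht)
        have he2 : ∫ t in c..x, f1d' t = ∫ t in c..x, (C.F t (v t)).2 := by
          refine intervalIntegral.integral_congr_ae ?_
          filter_upwards [hae2] with t h ht
          exact h (hiu ht)
        apply Prod.ext
        · show f' x = ((α, β) + ∫ t in c..x, C.F t (v t)).1
          rw [Prod.fst_add]
          rw [hrep1 x hx, he1]
          congr 1
        · show f1' x = ((α, β) + ∫ t in c..x, C.F t (v t)).2
          rw [Prod.snd_add]
          rw [hrep2 x hx, he2]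
          congr 1
      have hEq := huniqS v d hd hvc hveq
      have hvd := hEq right_mem_uIcc
      exact ⟨congrArg Prod.fst hvd, congrArg Prod.snd hvd⟩
    exact ⟨fun d hd => (hkey d hd).1, fun d hd => (hkey d hd).2⟩
  -- realness
  have hreal : (∀ x ∈ EI a b, (g x).im = 0) → z.im = 0 → α.im = 0 → β.im = 0 →
      ∀ x ∈ EI a b, (f x).im = 0 := by
    intro hgre hzre hare hbre x hx
    have hz : (starRingEnd ℂ) z = z := Complex.conj_eq_iff_im.2 hzre
    have hdom2 : InDomTauC (EI a b) p s (fun t => (starRingEnd ℂ) (f t))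
        (fun t => (starRingEnd ℂ) (fd t)) (fun t => (starRingEnd ℂ) (f1 t))
        (fun t => (starRingEnd ℂ) (f1d t)) := by
      refine ⟨?_, ?_, ?_⟩
      · intro x' hx' y hy
        obtain ⟨hii, heq2⟩ := hDf x' hx' y hy
        refine ⟨IVPAux.intervalIntegrable_conj hii, ?_⟩
        rw [← map_sub, heq2, IVPAux.intervalIntegral_conj hii]
      · filter_upwards [hquasi] with t h ht
        have h0 := h ht
        have := congrArg (starRingEnd ℂ) h0
        simpa [map_mul, map_add, Complex.conj_ofReal] using this
      · intro x' hx' y hy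
        obtain ⟨hii, heq2⟩ := hDf1 x' hx' y hy
        refine ⟨IVPAux.intervalIntegrable_conj hii, ?_⟩
        rw [← map_sub, heq2, IVPAux.intervalIntegral_conj hii]
    have htau2 : ∀ᵐ t ∂(volume : Measure ℝ), t ∈ EI a b →
        tauAppC q r s (fun t => (starRingEnd ℂ) (f t)) (fun t => (starRingEnd ℂ) (f1 t))
          (fun t => (starRingEnd ℂ) (f1d t)) t - z * (starRingEnd ℂ) (f t) = g t := by
      filter_upwards [htauf] with t h ht
      have h0 := h ht
      have hgt : (starRingEnd ℂ) (g t) = g t := Complex.conj_eq_iff_im.2 (hgre t ht)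
      have := congrArg (starRingEnd ℂ) h0
      rw [tauAppC] at this ⊢
      simpa [map_sub, map_mul, map_add, map_neg, map_div₀, map_one,
        Complex.conj_ofReal, hz, hgt] using this
    have hic1 : (starRingEnd ℂ) (f c) = α := by
      rw [hfc]
      exact Complex.conj_eq_iff_im.2 hare
    have hic2 : (starRingEnd ℂ) (f1 c) = β := by
      rw [hf1c]
      exact Complex.conj_eq_iff_im.2 hbre
    have := (huniq_main _ _ _ _ hdom2 htau2 hic1 hic2).1 hx
    exact Complex.conj_eq_iff_im.1 this
  exact ⟨f, fd, f1, f1d, ⟨hDf, hquasi, hDf1⟩, htauf, hfc, hf1c, huniq_main, hreal⟩
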